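/- arXiv:1407.1624 — 8 statements merged into one kernel-verified Lean document; each statement's English description precedes it below -/
import Mathlib

section
/- Let μ be a probability measure on [0,1]^2 whose pushforward under each coordinate projection v ↦ v_j (j = 1,2) is the uniform (Lebesgue) distribution on [0,1], and let C(u) = μ({v ∈ [0,1]^2 : v_1 ≤ u_1, v_2 ≤ u_2}). Then ∫_{[0,1]^2} C(u) du = ∫_{[0,1]^2} u_1 u_2 dμ(u); consequently the two expressions 12 ∫_{[0,1]^2} C(u) du − 3 and 12 ∫_{[0,1]^2} u_1 u_2 dμ(u) − 3 for Spearman's rho coincide. -/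
open MeasureTheory

lemma aux_restrict_pi_box :
    (volume : Measure (Fin 2 → ℝ)).restrict (Set.univ.pi fun _ : Fin 2 => Set.Icc (0:ℝ) 1)
      = Measure.pi (fun _ : Fin 2 => volume.restrict (Set.Icc (0:ℝ) 1)) := by
  refine (Measure.pi_eq (μ := fun _ : Fin 2 => (volume : Measure ℝ).restrict (Set.Icc (0:ℝ) 1))
    fun s hs => ?_).symm
  rw [Measure.restrict_apply (MeasurableSet.univ_pi hs)]
  have h : (Set.univ.pi s) ∩ (Set.univ.pi fun _ : Fin 2 => Set.Icc (0:ℝ) 1)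
      = Set.univ.pi fun i => s i ∩ Set.Icc (0:ℝ) 1 := by
    ext x
    simp only [Set.mem_inter_iff, Set.mem_pi, Set.mem_univ, true_implies, Set.mem_Icc,
      forall_and]
  rw [h, volume_pi_pi]
  simp_rw [Measure.restrict_apply (hs _)]

/-- For a bivariate copula measure `μ` with c.d.f. `C`, the two classical
expressions for Spearman's rho coincide:
`∫_{[0,1]^2} C(u) du = ∫ u₁u₂ dμ(u)`, hence
`12 ∫ C du - 3 = 12 ∫ u₁u₂ dμ - 3`. -/
theorem spearman_rho_two_expressions
    (μ : Measure (Fin 2 → ℝ)) [IsProbabilityMeasure μ]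
    (hmarg : ∀ j : Fin 2, μ.map (fun v => v j) = volume.restrict (Set.Icc (0:ℝ) 1))
    (C : (Fin 2 → ℝ) → ℝ)
    (hC : ∀ u, C u = (μ {v | ∀ j, v j ≤ u j}).toReal) :
    (∫ u in Set.univ.pi (fun _ : Fin 2 => Set.Icc (0:ℝ) 1), C u
        = ∫ u, u 0 * u 1 ∂μ) ∧
    (12 * (∫ u in Set.univ.pi (fun _ : Fin 2 => Set.Icc (0:ℝ) 1), C u) - 3
        = 12 * (∫ u, u 0 * u 1 ∂μ) - 3) := by
  have key : (∫ u in Set.univ.pi (fun _ : Fin 2 => Set.Icc (0:ℝ) 1), C u)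
      = ∫ u, u 0 * u 1 ∂μ := by
    set ν : Measure ℝ := volume.restrict (Set.Icc (0:ℝ) 1) with hν
    haveI hνprob : IsProbabilityMeasure ν := ⟨by simp [hν, Real.volume_Icc]⟩
    set π : Measure (Fin 2 → ℝ) := Measure.pi (fun _ : Fin 2 => ν) with hπ
    haveI hπprob : IsProbabilityMeasure π := by rw [hπ]; infer_instance
    have hmeasj : ∀ j : Fin 2, Measurable fun v : Fin 2 → ℝ => v j := measurable_pi_apply
    -- a.e. each coordinate lies in [0,1]
    have hae : ∀ j : Fin 2, ∀ᵐ v ∂μ, v j ∈ Set.Icc (0:ℝ) 1 := by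
      intro j
      have h0 : μ.map (fun v => v j) (Set.Icc (0:ℝ) 1)ᶜ = 0 := by
        rw [hmarg j, Measure.restrict_apply measurableSet_Icc.compl]
        simp
      rw [Measure.map_apply (hmeasj j) measurableSet_Icc.compl] at h0
      rw [ae_iff]
      simpa [Set.preimage] using h0
    -- integrability facts
    have hintj : ∀ j : Fin 2, Integrable (fun v => v j) μ := by
      intro j
      refine Integrable.mono' (integrable_const 1) (hmeasj j).aestronglyMeasurable ?_
      filter_upwards [hae j] with v hv
      rw [Real.norm_eq_abs, abs_le]
      exact ⟨by linarith [hv.1], hv.2⟩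
    have hintprod : Integrable (fun v : Fin 2 → ℝ => v 0 * v 1) μ := by
      refine Integrable.mono' (integrable_const 1)
        ((hmeasj 0).mul (hmeasj 1)).aestronglyMeasurable ?_
      filter_upwards [hae 0, hae 1] with v h0 h1
      rw [Real.norm_eq_abs, abs_mul]
      calc |v 0| * |v 1| ≤ 1 * 1 := by
            gcongr <;> rw [abs_le] <;> constructor <;>
              first
                | linarith [h0.1] | linarith [h0.2] | linarith [h1.1] | linarith [h1.2]
        _ = 1 := by ring
    -- means of coordinates
    have hmean : ∀ j : Fin 2, ∫ v, v j ∂μ = 1 / 2 := by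
      intro j
      have h1 : ∫ v, v j ∂μ = ∫ x, x ∂(μ.map fun v => v j) :=
        (integral_map (hmeasj j).aemeasurable aestronglyMeasurable_id).symm
      rw [h1, hmarg j]
      show ∫ x in Set.Icc (0:ℝ) 1, x = 1 / 2
      rw [MeasureTheory.integral_Icc_eq_integral_Ioc,
        ← intervalIntegral.integral_of_le (zero_le_one (α := ℝ))]
      rw [integral_id]
      norm_num
    -- the product set and slices
    set S : Set ((Fin 2 → ℝ) × (Fin 2 → ℝ)) := {p | ∀ j, p.2 j ≤ p.1 j} with hS
    have hSm : MeasurableSet S := by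
      have h : S = ⋂ j : Fin 2, {p : (Fin 2 → ℝ) × (Fin 2 → ℝ) | p.2 j ≤ p.1 j} := by
        ext p; simp [hS, Set.mem_iInter]
      rw [h]
      exact MeasurableSet.iInter fun j =>
        measurableSet_le ((hmeasj j).comp measurable_snd) ((hmeasj j).comp measurable_fst)
    have hAm : ∀ u : Fin 2 → ℝ, MeasurableSet {v : Fin 2 → ℝ | ∀ j, v j ≤ u j} := by
      intro u
      have h : {v : Fin 2 → ℝ | ∀ j, v j ≤ u j} = ⋂ j, {v : Fin 2 → ℝ | v j ≤ u j} := by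
        ext v; simp
      rw [h]
      exact MeasurableSet.iInter fun j => measurableSet_le (hmeasj j) measurable_const
    have hBm : ∀ v : Fin 2 → ℝ, MeasurableSet {u : Fin 2 → ℝ | ∀ j, v j ≤ u j} := by
      intro v
      have h : {u : Fin 2 → ℝ | ∀ j, v j ≤ u j} = ⋂ j, {u : Fin 2 → ℝ | v j ≤ u j} := by
        ext u; simp
      rw [h]
      exact MeasurableSet.iInter fun j => measurableSet_le measurable_const (hmeasj j)
    have hint : Integrable (S.indicator fun _ => (1:ℝ)) (π.prod μ) := by
      rw [integrable_indicator_iff hSm]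
      refine integrableOn_const ?_
      exact (lt_of_le_of_lt (measure_mono (Set.subset_univ _)) (measure_lt_top _ _)).ne
    -- inner integral computation (a.e.)
    have hinner : ∀ᵐ v ∂μ, (π {u | ∀ j, v j ≤ u j}).toReal = (1 - v 0) * (1 - v 1) := by
      filter_upwards [hae 0, hae 1] with v h0 h1
      have hset : {u : Fin 2 → ℝ | ∀ j, v j ≤ u j} = Set.univ.pi fun j => Set.Ici (v j) := by
        ext u
        simp only [Set.mem_setOf_eq, Set.mem_pi, Set.mem_univ, Set.mem_Ici, true_implies]
      rw [hset, hπ, Measure.pi_pi]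
      have hν' : ∀ j : Fin 2, v j ∈ Set.Icc (0:ℝ) 1 →
          ν (Set.Ici (v j)) = ENNReal.ofReal (1 - v j) := by
        intro j hj
        rw [hν, Measure.restrict_apply measurableSet_Ici]
        have h : Set.Ici (v j) ∩ Set.Icc (0:ℝ) 1 = Set.Icc (v j) 1 := by
          ext x
          simp only [Set.mem_inter_iff, Set.mem_Ici, Set.mem_Icc]
          constructor
          · rintro ⟨ha, _, hb⟩; exact ⟨ha, hb⟩
          · rintro ⟨ha, hb⟩; exact ⟨ha, le_trans hj.1 ha, hb⟩
        rw [h, Real.volume_Icc]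
      rw [Fin.prod_univ_two, hν' 0 h0, hν' 1 h1,
        ← ENNReal.ofReal_mul (by linarith [h0.2]),
        ENNReal.toReal_ofReal (mul_nonneg (by linarith [h0.2]) (by linarith [h1.2]))]
    -- expansion of the expectation
    have hfinal : ∫ v, (1 - v 0) * (1 - v 1) ∂μ = ∫ v, v 0 * v 1 ∂μ := by
      have expand : (fun v : Fin 2 → ℝ => (1 - v 0) * (1 - v 1))
          = fun v : Fin 2 → ℝ => 1 - v 0 - v 1 + v 0 * v 1 := by
        funext v; ring
      have i1 : Integrable (fun v : Fin 2 → ℝ => 1 - v 0) μ := by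
        exact (integrable_const 1).sub (hintj 0)
      have i2 : Integrable (fun v : Fin 2 → ℝ => 1 - v 0 - v 1) μ := by
        exact i1.sub (hintj 1)
      rw [expand, integral_add i2 hintprod, integral_sub i1 (hintj 1),
        integral_sub (integrable_const 1) (hintj 0), integral_const, hmean 0, hmean 1]
      simp
      norm_num
    calc ∫ u in Set.univ.pi (fun _ : Fin 2 => Set.Icc (0:ℝ) 1), C u
        = ∫ u, C u ∂π := by rw [aux_restrict_pi_box]
      _ = ∫ u, ∫ v, S.indicator (fun _ => (1:ℝ)) (u, v) ∂μ ∂π := by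
          refine integral_congr_ae (Filter.Eventually.of_forall fun u => ?_)
          have h : ∀ v, S.indicator (fun _ => (1:ℝ)) (u, v)
              = ({v : Fin 2 → ℝ | ∀ j, v j ≤ u j}).indicator (fun _ => (1:ℝ)) v := by
            intro v; simp [Set.indicator_apply, hS]
          simp_rw [h]
          exact (hC u).trans (integral_indicator_one (hAm u)).symm
      _ = ∫ v, ∫ u, S.indicator (fun _ => (1:ℝ)) (u, v) ∂π ∂μ := by
          apply integral_integral_swap
          exact hint
      _ = ∫ v, (π {u | ∀ j, v j ≤ u j}).toReal ∂μ := by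
          refine integral_congr_ae (Filter.Eventually.of_forall fun v => ?_)
          have h : ∀ u, S.indicator (fun _ => (1:ℝ)) (u, v)
              = ({u : Fin 2 → ℝ | ∀ j, v j ≤ u j}).indicator (fun _ => (1:ℝ)) u := by
            intro u; simp [Set.indicator_apply, hS]
          simp_rw [h]
          exact integral_indicator_one (hBm v)
      _ = ∫ v, (1 - v 0) * (1 - v 1) ∂μ := integral_congr_ae hinner
      _ = ∫ v, v 0 * v 1 ∂μ := hfinal
  exact ⟨key, by rw [key]⟩
end

section
/- Let μ be a probability measure on [0,1]^d, C(u) = μ({v : v ≤ u componentwise}) its cumulative distribution function, and A ⊆ {1,…,d} nonempty. Define ψ_{μ,A}(g) = ∫_{[0,1]^d} g(u^A) du − ∫_{[0,1]^d} Σ_{j∈A} ∏_{l∈A\{j}} (1 − v_l) g(v^{{j}}) dμ(v) for bounded measurable g : [0,1]^d → ℝ, and I_{μ,A}(u) = ∏_{l∈A}(1 − u_l) − ∫_{[0,1]^d} Σ_{j∈A} ∏_{l∈A\{j}} (1 − v_l) 1(u_j ≤ v_j) dμ(v). Then ψ_{μ,A}(C) = ∫_{[0,1]^d} I_{μ,A}(u)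 dμ(u). -/
open MeasureTheory

/-- The identity `ψ_{μ,A}(C) = ∫ I_{μ,A}(u) dμ(u)` relating the map `ψ_{μ,A}`
applied to the c.d.f. `C` of `μ` and the integral of the influence-type function
`I_{μ,A}` against `μ`. -/
theorem psi_of_cdf_eq_integral_I
    {d : ℕ} (hd : 1 ≤ d)
    (μ : Measure (Fin d → ℝ)) [IsProbabilityMeasure μ]
    (hsupp : μ {v | ∀ j, v j ∈ Set.Icc (0:ℝ) 1} = 1)
    (C : (Fin d → ℝ) → ℝ)
    (hC : ∀ u, C u = (μ {v | ∀ j, v j ≤ u j}).toReal)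
    (A : Finset (Fin d)) (hA : A.Nonempty) :
    ((∫ u in Set.univ.pi (fun _ : Fin d => Set.Icc (0:ℝ) 1),
          C (fun j => if j ∈ A then u j else 1))
        - ∫ v, (∑ j ∈ A, (∏ l ∈ A.erase j, (1 - v l))
            * C (fun l => if l = j then v j else 1)) ∂μ)
      = ∫ u, ((∏ l ∈ A, (1 - u l))
          - ∫ v, (∑ j ∈ A, (∏ l ∈ A.erase j, (1 - v l))
              * (if u j ≤ v j then (1:ℝ) else 0)) ∂μ) ∂μ := by
  classical
  set cube : Set (Fin d → ℝ) := Set.univ.pi (fun _ : Fin d => Set.Icc (0:ℝ) 1) with hcube_def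
  have hcube_meas : MeasurableSet cube :=
    MeasurableSet.univ_pi fun _ => measurableSet_Icc
  have hsetcube : {v : Fin d → ℝ | ∀ j, v j ∈ Set.Icc (0:ℝ) 1} = cube := by
    ext v; simp only [hcube_def, Set.mem_setOf_eq, Set.mem_univ_pi]
  have hμcube : μ cube = 1 := by rw [← hsetcube]; exact hsupp
  have hnull : μ cubeᶜ = 0 := by
    have h := measure_compl hcube_meas (measure_ne_top μ _)
    rw [hμcube, measure_univ] at h
    simpa using h
  have hnull' : μ {v : Fin d → ℝ | ∀ j, v j ∈ Set.Icc (0:ℝ) 1}ᶜ = 0 := by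
    rw [hsetcube]; exact hnull
  have haeI : ∀ᵐ v ∂μ, ∀ j, v j ∈ Set.Icc (0:ℝ) 1 := by
    rw [ae_iff]
    refine measure_mono_null ?_ hnull'
    intro v hv
    exact hv
  haveI : IsFiniteMeasure (volume.restrict cube) := by
    constructor
    rw [Measure.restrict_apply_univ, hcube_def, volume_pi_pi]
    simp [Real.volume_Icc]
  -- measurability of lower-orthant sets
  have hsetb : ∀ b : Fin d → ℝ, MeasurableSet {v : Fin d → ℝ | ∀ j, v j ≤ b j} := by
    intro b
    have h : {v : Fin d → ℝ | ∀ j, v j ≤ b j} = ⋂ j, {v | v j ≤ b j} := by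
      ext v; simp
    rw [h]
    exact MeasurableSet.iInter fun j => measurableSet_le (measurable_pi_apply j) measurable_const
  ------------------------------------------------------------------
  -- Step A : first term equals ∫ ∏_{l ∈ A} (1 - v l) dμ
  ------------------------------------------------------------------
  have hTset : MeasurableSet {p : (Fin d → ℝ) × (Fin d → ℝ) |
      ∀ j, p.2 j ≤ (if j ∈ A then p.1 j else 1)} := by
    have h : {p : (Fin d → ℝ) × (Fin d → ℝ) | ∀ j, p.2 j ≤ (if j ∈ A then p.1 j else 1)}
        = ⋂ j, {p : (Fin d → ℝ) × (Fin d → ℝ) | p.2 j ≤ (if j ∈ A then p.1 j else 1)} := by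
      ext p; simp
    rw [h]
    refine MeasurableSet.iInter fun j => ?_
    by_cases hj : j ∈ A
    · simp only [hj, if_true]
      exact measurableSet_le (measurable_snd.eval (a := j))
        (measurable_fst.eval (a := j))
    · simp only [hj, if_false]
      exact measurableSet_le (measurable_snd.eval (a := j)) measurable_const
  have hFmeas : Measurable (Function.uncurry fun u v : Fin d → ℝ =>
      (if (∀ j, v j ≤ (if j ∈ A then u j else 1)) then (1:ℝ) else 0)) := by
    have h : (Function.uncurry fun u v : Fin d → ℝ =>
        (if (∀ j, v j ≤ (if j ∈ A then u j else 1)) then (1:ℝ) else 0))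
        = Set.indicator {p : (Fin d → ℝ) × (Fin d → ℝ) |
            ∀ j, p.2 j ≤ (if j ∈ A then p.1 j else 1)} (fun _ => (1:ℝ)) := by
      ext p
      by_cases h : ∀ j, p.2 j ≤ (if j ∈ A then p.1 j else 1) <;>
        simp [Function.uncurry, Set.indicator_apply, h]
    rw [h]
    exact measurable_const.indicator hTset
  have hFint : Integrable (Function.uncurry fun u v : Fin d → ℝ =>
      (if (∀ j, v j ≤ (if j ∈ A then u j else 1)) then (1:ℝ) else 0))
      ((volume.restrict cube).prod μ) := by
    refine Integrable.mono' (integrable_const 1) hFmeas.aestronglyMeasurable ?_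
    refine Filter.Eventually.of_forall fun p => ?_
    by_cases h : ∀ j, p.2 j ≤ (if j ∈ A then p.1 j else 1) <;>
      simp [Function.uncurry, h]
  have hT1 : (∫ u in cube, C (fun j => if j ∈ A then u j else 1))
      = ∫ v, ∏ l ∈ A, (1 - v l) ∂μ := by
    have e1 : (∫ u in cube, C (fun j => if j ∈ A then u j else 1))
        = ∫ u in cube, ∫ v, (if (∀ j, v j ≤ (if j ∈ A then u j else 1)) then (1:ℝ) else 0) ∂μ := by
      refine integral_congr_ae (Filter.Eventually.of_forall fun u => ?_)
      show C (fun j => if j ∈ A then u j else 1)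
        = ∫ v, (if (∀ j, v j ≤ (if j ∈ A then u j else 1)) then (1:ℝ) else 0) ∂μ
      rw [hC]
      have h2 : (fun v : Fin d → ℝ =>
          (if (∀ j, v j ≤ (if j ∈ A then u j else 1)) then (1:ℝ) else 0))
          = Set.indicator {v : Fin d → ℝ | ∀ j, v j ≤ (if j ∈ A then u j else 1)}
              (fun _ => (1:ℝ)) := by
        ext v
        by_cases h : ∀ j, v j ≤ (if j ∈ A then u j else 1) <;>
          simp [Set.indicator_apply, h]
      rw [h2, integral_indicator_const (1:ℝ) (hsetb (fun j => if j ∈ A then u j else 1))]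
      simp [Measure.real]
    rw [e1, integral_integral_swap hFint]
    refine integral_congr_ae ?_
    filter_upwards [haeI] with v hv
    have h2 : (fun u : Fin d → ℝ =>
        (if (∀ j, v j ≤ (if j ∈ A then u j else 1)) then (1:ℝ) else 0))
        = Set.indicator {u : Fin d → ℝ | ∀ j, v j ≤ (if j ∈ A then u j else 1)}
            (fun _ => (1:ℝ)) := by
      ext u
      by_cases h : ∀ j, v j ≤ (if j ∈ A then u j else 1) <;>
        simp [Set.indicator_apply, h]
    have hU : MeasurableSet {u : Fin d → ℝ | ∀ j, v j ≤ (if j ∈ A then u j else 1)} := by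
      have h : {u : Fin d → ℝ | ∀ j, v j ≤ (if j ∈ A then u j else 1)}
          = ⋂ j, {u : Fin d → ℝ | v j ≤ (if j ∈ A then u j else 1)} := by ext u; simp
      rw [h]
      refine MeasurableSet.iInter fun j => ?_
      by_cases hj : j ∈ A
      · simp only [hj, if_true]
        exact measurableSet_le measurable_const (measurable_pi_apply j)
      · simp only [hj, if_false]
        exact measurableSet_le measurable_const measurable_const
    rw [h2, integral_indicator_const (1:ℝ) hU, smul_eq_mul, mul_one,
      Measure.real, Measure.restrict_apply hU]
    have hset : {u : Fin d → ℝ | ∀ j, v j ≤ (if j ∈ A then u j else 1)} ∩ cube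
        = Set.univ.pi (fun j => if j ∈ A then Set.Icc (v j) 1 else Set.Icc (0:ℝ) 1) := by
      ext u
      simp only [Set.mem_inter_iff, Set.mem_setOf_eq, hcube_def, Set.mem_univ_pi]
      constructor
      · rintro ⟨h1, h2⟩ j
        by_cases hj : j ∈ A
        · have := h1 j
          simp only [hj, if_true] at this ⊢
          exact ⟨this, (h2 j).2⟩
        · simp only [hj, if_false]
          exact h2 j
      · intro h
        constructor
        · intro j
          by_cases hj : j ∈ A
          · have := h j
            simp only [hj, if_true] at this ⊢
            exact this.1
          · simp only [hj, if_false]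
            exact (hv j).2
        · intro j
          by_cases hj : j ∈ A
          · have := h j
            simp only [hj, if_true] at this
            exact ⟨le_trans (hv j).1 this.1, this.2⟩
          · have := h j
            simpa only [hj, if_false] using this
    rw [hset, volume_pi_pi, ENNReal.toReal_prod]
    have hfac : ∀ j : Fin d,
        (volume (if j ∈ A then Set.Icc (v j) 1 else Set.Icc (0:ℝ) 1)).toReal
        = (if j ∈ A then (1 - v j) else 1) := by
      intro j
      by_cases hj : j ∈ A
      · simp only [hj, if_true, Real.volume_Icc]
        rw [ENNReal.toReal_ofReal (by linarith [(hv j).2])]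
      · simp [hj, Real.volume_Icc]
    calc (∏ j : Fin d, (volume (if j ∈ A then Set.Icc (v j) 1 else Set.Icc (0:ℝ) 1)).toReal)
        = ∏ j : Fin d, (if j ∈ A then (1 - v j) else 1) :=
          Finset.prod_congr rfl fun j _ => hfac j
      _ = ∏ l ∈ A, (1 - v l) := by
          rw [Finset.prod_ite_mem Finset.univ A (fun j => 1 - v j), Finset.univ_inter]
  ------------------------------------------------------------------
  -- Step B : second term equals ∫ G dμ by Fubini
  ------------------------------------------------------------------
  have hCsingle : ∀ (j : Fin d) (v : Fin d → ℝ),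
      C (fun l => if l = j then v j else 1) = (μ {w : Fin d → ℝ | w j ≤ v j}).toReal := by
    intro j v
    rw [hC]
    congr 1
    apply measure_congr
    rw [Filter.eventuallyEq_set]
    filter_upwards [haeI] with w hw
    constructor
    · intro h
      have := h j
      simpa using this
    · intro h l
      by_cases hl : l = j
      · subst hl; simpa using h
      · simp only [hl, if_false]
        exact (hw l).2
  have hindicator : ∀ (j : Fin d) (t : ℝ),
      (fun w : Fin d → ℝ => (if w j ≤ t then (1:ℝ) else 0))
        = Set.indicator {w : Fin d → ℝ | w j ≤ t} (fun _ => (1:ℝ)) := by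
    intro j t
    ext w
    by_cases h : w j ≤ t <;> simp [Set.indicator_apply, h]
  have hjset : ∀ (j : Fin d) (t : ℝ), MeasurableSet {w : Fin d → ℝ | w j ≤ t} :=
    fun j t => measurableSet_le (measurable_pi_apply j) measurable_const
  have hHmeas : Measurable (Function.uncurry fun v w : Fin d → ℝ =>
      (∑ j ∈ A, (∏ l ∈ A.erase j, (1 - v l)) * (if w j ≤ v j then (1:ℝ) else 0))) := by
    refine Finset.measurable_sum A fun j _ => ?_
    refine Measurable.mul ?_ ?_
    · refine Finset.measurable_prod _ fun l _ => ?_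
      exact measurable_const.sub (measurable_fst.eval (a := l))
    · have h : (fun p : (Fin d → ℝ) × (Fin d → ℝ) => (if p.2 j ≤ p.1 j then (1:ℝ) else 0))
          = Set.indicator {p : (Fin d → ℝ) × (Fin d → ℝ) | p.2 j ≤ p.1 j} (fun _ => (1:ℝ)) := by
        ext p
        by_cases h : p.2 j ≤ p.1 j <;> simp [Set.indicator_apply, h]
      show Measurable fun p : (Fin d → ℝ) × (Fin d → ℝ) => (if p.2 j ≤ p.1 j then (1:ℝ) else 0)
      rw [h]
      exact measurable_const.indicator
        (measurableSet_le (measurable_snd.eval (a := j))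
          (measurable_fst.eval (a := j)))
  have hbound : ∀ v w : Fin d → ℝ, (∀ j, v j ∈ Set.Icc (0:ℝ) 1) →
      ‖∑ j ∈ A, (∏ l ∈ A.erase j, (1 - v l)) * (if w j ≤ v j then (1:ℝ) else 0)‖
        ≤ (A.card : ℝ) := by
    intro v w hv
    calc ‖∑ j ∈ A, (∏ l ∈ A.erase j, (1 - v l)) * (if w j ≤ v j then (1:ℝ) else 0)‖
        ≤ ∑ j ∈ A, ‖(∏ l ∈ A.erase j, (1 - v l)) * (if w j ≤ v j then (1:ℝ) else 0)‖ :=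
          norm_sum_le _ _
      _ ≤ ∑ _j ∈ A, (1:ℝ) := by
          refine Finset.sum_le_sum fun j _ => ?_
          rw [norm_mul]
          have h1 : ‖∏ l ∈ A.erase j, (1 - v l)‖ ≤ 1 := by
            rw [Real.norm_eq_abs, Finset.abs_prod]
            refine Finset.prod_le_one (fun l _ => abs_nonneg _) (fun l _ => ?_)
            rw [abs_le]
            constructor
            · linarith [(hv l).2]
            · linarith [(hv l).1]
          have h2 : ‖(if w j ≤ v j then (1:ℝ) else 0)‖ ≤ 1 := by
            by_cases h : w j ≤ v j <;> simp [h]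
          calc ‖∏ l ∈ A.erase j, (1 - v l)‖ * ‖(if w j ≤ v j then (1:ℝ) else 0)‖
              ≤ 1 * 1 := mul_le_mul h1 h2 (norm_nonneg _) zero_le_one
            _ = 1 := by ring
      _ = (A.card : ℝ) := by simp
  have haefst : ∀ᵐ p ∂(μ.prod μ), ∀ j, p.1 j ∈ Set.Icc (0:ℝ) 1 := by
    have h : μ.prod μ (({v : Fin d → ℝ | ∀ j, v j ∈ Set.Icc (0:ℝ) 1}ᶜ) ×ˢ
        (Set.univ : Set (Fin d → ℝ))) = 0 := by
      rw [Measure.prod_prod, hnull', zero_mul]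
    rw [ae_iff]
    refine measure_mono_null ?_ h
    intro p hp
    simp only [Set.mem_setOf_eq] at hp
    exact ⟨hp, Set.mem_univ _⟩
  have hHint : Integrable (Function.uncurry fun v w : Fin d → ℝ =>
      (∑ j ∈ A, (∏ l ∈ A.erase j, (1 - v l)) * (if w j ≤ v j then (1:ℝ) else 0)))
      (μ.prod μ) := by
    refine Integrable.mono' (integrable_const (A.card : ℝ)) hHmeas.aestronglyMeasurable ?_
    filter_upwards [haefst] with p hp
    exact hbound p.1 p.2 hp
  have hT2 : (∫ v, (∑ j ∈ A, (∏ l ∈ A.erase j, (1 - v l))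
            * C (fun l => if l = j then v j else 1)) ∂μ)
      = ∫ w, ∫ v, (∑ j ∈ A, (∏ l ∈ A.erase j, (1 - v l))
            * (if w j ≤ v j then (1:ℝ) else 0)) ∂μ ∂μ := by
    have e1 : (∫ v, (∑ j ∈ A, (∏ l ∈ A.erase j, (1 - v l))
            * C (fun l => if l = j then v j else 1)) ∂μ)
        = ∫ v, ∫ w, (∑ j ∈ A, (∏ l ∈ A.erase j, (1 - v l))
            * (if w j ≤ v j then (1:ℝ) else 0)) ∂μ ∂μ := by
      refine integral_congr_ae (Filter.Eventually.of_forall fun v => ?_)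
      show (∑ j ∈ A, (∏ l ∈ A.erase j, (1 - v l)) * C (fun l => if l = j then v j else 1))
        = ∫ w, (∑ j ∈ A, (∏ l ∈ A.erase j, (1 - v l))
            * (if w j ≤ v j then (1:ℝ) else 0)) ∂μ
      rw [integral_finset_sum]
      · refine Finset.sum_congr rfl fun j _ => ?_
        rw [integral_const_mul, hCsingle j v, hindicator j (v j),
          integral_indicator_const (1:ℝ) (hjset j (v j))]
        simp [Measure.real]
      · intro j _
        have h : (fun w : Fin d → ℝ => (∏ l ∈ A.erase j, (1 - v l))
              * (if w j ≤ v j then (1:ℝ) else 0))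
            = Set.indicator {w : Fin d → ℝ | w j ≤ v j}
                (fun _ => (∏ l ∈ A.erase j, (1 - v l))) := by
          ext w
          by_cases h : w j ≤ v j <;> simp [Set.indicator_apply, h]
        rw [h]
        exact (integrable_const _).indicator (hjset j (v j))
    rw [e1]
    exact integral_integral_swap hHint
  ------------------------------------------------------------------
  -- Step C : assemble
  ------------------------------------------------------------------
  have hPint : Integrable (fun u : Fin d → ℝ => ∏ l ∈ A, (1 - u l)) μ := by
    refine Integrable.mono' (integrable_const 1)
      (Finset.measurable_prod _ fun l _ =>
        measurable_const.sub (measurable_pi_apply l)).aestronglyMeasurable ?_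
    filter_upwards [haeI] with u hu
    rw [Real.norm_eq_abs, Finset.abs_prod]
    refine Finset.prod_le_one (fun l _ => abs_nonneg _) (fun l _ => ?_)
    rw [abs_le]
    constructor
    · linarith [(hu l).2]
    · linarith [(hu l).1]
  have hGmeas : StronglyMeasurable (fun u : Fin d → ℝ =>
      ∫ v, (∑ j ∈ A, (∏ l ∈ A.erase j, (1 - v l))
          * (if u j ≤ v j then (1:ℝ) else 0)) ∂μ) := by
    refine StronglyMeasurable.integral_prod_right ?_
    exact ((hHmeas.comp measurable_swap).stronglyMeasurable :
      StronglyMeasurable (Function.uncurry fun u v : Fin d → ℝ =>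
        (∑ j ∈ A, (∏ l ∈ A.erase j, (1 - v l)) * (if u j ≤ v j then (1:ℝ) else 0))))
  have hGint : Integrable (fun u : Fin d → ℝ =>
      ∫ v, (∑ j ∈ A, (∏ l ∈ A.erase j, (1 - v l))
          * (if u j ≤ v j then (1:ℝ) else 0)) ∂μ) μ := by
    refine Integrable.mono' (integrable_const (A.card : ℝ)) hGmeas.aestronglyMeasurable ?_
    refine Filter.Eventually.of_forall fun u => ?_
    have h := norm_integral_le_of_norm_le_const (μ := μ)
      (f := fun v => (∑ j ∈ A, (∏ l ∈ A.erase j, (1 - v l))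
          * (if u j ≤ v j then (1:ℝ) else 0))) (C := (A.card : ℝ)) ?_
    · simpa [measure_univ] using h
    · filter_upwards [haeI] with v hv
      exact hbound v u hv
  rw [hT1, hT2, integral_sub hPint hGint]
end

section
/- Let μ be a probability measure on [0,1]^d whose pushforward under each coordinate projection v ↦ v_j is the uniform (Lebesgue) distribution on [0,1], and let A ⊆ {1,…,d} be nonempty. Then for every u ∈ [0,1]^d, |I_{μ,A}(u)| ≤ 1, where I_{μ,A}(u) = ∏_{l∈A}(1 − u_l) − ∫_{[0,1]^d} Σ_{j∈A} ∏_{l∈A\{j}} (1 − v_l) 1(u_j ≤ v_j) dμ(v). -/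
open MeasureTheory

/-- AM-GM special case: the product of `n = s.card` nonnegative reals is at most the
average of their `n`-th powers. -/
lemma prod_le_avg_pow {ι : Type*} (s : Finset ι) (hs : s.Nonempty) (a : ι → ℝ)
    (ha : ∀ i ∈ s, 0 ≤ a i) :
    ∏ i ∈ s, a i ≤ (∑ i ∈ s, a i ^ s.card) / s.card := by
  have hn : (s.card : ℝ) ≠ 0 := by
    exact_mod_cast Finset.card_ne_zero_of_mem hs.choose_spec
  have key := Real.geom_mean_le_arith_mean_weighted s (fun _ => (s.card : ℝ)⁻¹)
      (fun i => a i ^ s.card) (fun i _ => inv_nonneg.mpr (Nat.cast_nonneg _))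
      (by simp [Finset.sum_const, hn]) (fun i hi => pow_nonneg (ha i hi) _)
  have hL : (∏ i ∈ s, ((a i ^ s.card : ℝ)) ^ ((s.card : ℝ)⁻¹)) = ∏ i ∈ s, a i := by
    refine Finset.prod_congr rfl fun i hi => ?_
    rw [← Real.rpow_natCast (a i) s.card, ← Real.rpow_mul (ha i hi),
      mul_inv_cancel₀ hn, Real.rpow_one]
  rw [hL] at key
  calc ∏ i ∈ s, a i ≤ ∑ i ∈ s, (s.card : ℝ)⁻¹ * a i ^ s.card := key
    _ = (∑ i ∈ s, a i ^ s.card) / s.card := by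
        rw [← Finset.mul_sum, inv_mul_eq_div]

/-- For a copula measure `μ` on `[0,1]^d` (uniform margins) and a nonempty
`A ⊆ {1,…,d}`, the function `I_{μ,A}` is bounded by `1` in absolute value on the
cube. -/
theorem abs_I_le_one
    {d : ℕ} (μ : Measure (Fin d → ℝ)) [IsProbabilityMeasure μ]
    (hmarg : ∀ l : Fin d, μ.map (fun v => v l) = volume.restrict (Set.Icc (0:ℝ) 1))
    (A : Finset (Fin d)) (hA : A.Nonempty)
    (u : Fin d → ℝ) (hu : ∀ j, u j ∈ Set.Icc (0:ℝ) 1) :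
    |(∏ l ∈ A, (1 - u l))
        - ∫ v, ∑ j ∈ A, (∏ l ∈ A.erase j, (1 - v l))
            * (if u j ≤ v j then (1:ℝ) else 0) ∂μ| ≤ 1 := by
  classical
  set k := A.card with hk
  have hk1 : 1 ≤ k := Finset.card_pos.mpr hA
  set n := k - 1 with hn
  -- the integrand and the majorant
  set g : (Fin d → ℝ) → ℝ := fun v => ∑ j ∈ A, (∏ l ∈ A.erase j, (1 - v l))
      * (if u j ≤ v j then (1:ℝ) else 0) with hg
  set h : (Fin d → ℝ) → ℝ := fun v => ∑ l ∈ A, (1 - v l) ^ n with hh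
  -- a.e. every coordinate is in [0,1]
  have hae : ∀ᵐ v ∂μ, ∀ l, v l ∈ Set.Icc (0:ℝ) 1 := by
    rw [MeasureTheory.ae_all_iff]
    intro l
    have hmap : μ.map (fun v => v l) (Set.Icc (0:ℝ) 1)ᶜ = 0 := by
      rw [hmarg l, Measure.restrict_apply measurableSet_Icc.compl]
      simp
    rw [Measure.map_apply (measurable_pi_apply l) measurableSet_Icc.compl] at hmap
    rw [MeasureTheory.ae_iff]
    convert hmap using 2
    rfl
  -- measurability
  have hg_meas : Measurable g := by
    apply Finset.measurable_sum
    intro j _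
    apply Measurable.mul
    · exact Finset.measurable_prod _ fun l _ => (measurable_const.sub (measurable_pi_apply l))
    · exact Measurable.ite (measurableSet_le measurable_const (measurable_pi_apply j))
        measurable_const measurable_const
  have hh_meas : Measurable h :=
    Finset.measurable_sum _ fun l _ =>
      (measurable_const.sub (measurable_pi_apply l)).pow measurable_const
  -- pointwise facts on the cube
  have hg_nonneg : ∀ᵐ v ∂μ, 0 ≤ g v := by
    filter_upwards [hae] with v hv
    apply Finset.sum_nonneg
    intro j _
    apply mul_nonneg
    · exact Finset.prod_nonneg fun l _ => by linarith [(hv l).2]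
    · positivity
  have hg_le_one_terms : ∀ᵐ v ∂μ, ∀ j ∈ A,
      (∏ l ∈ A.erase j, (1 - v l)) * (if u j ≤ v j then (1:ℝ) else 0)
        ≤ ∏ l ∈ A.erase j, (1 - v l) := by
    filter_upwards [hae] with v hv
    intro j _
    have hprod : 0 ≤ ∏ l ∈ A.erase j, (1 - v l) :=
      Finset.prod_nonneg fun l _ => by linarith [(hv l).2]
    have : (if u j ≤ v j then (1:ℝ) else 0) ≤ 1 := by split <;> norm_num
    calc (∏ l ∈ A.erase j, (1 - v l)) * (if u j ≤ v j then (1:ℝ) else 0)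
        ≤ (∏ l ∈ A.erase j, (1 - v l)) * 1 := by
          apply mul_le_mul_of_nonneg_left this hprod
      _ = ∏ l ∈ A.erase j, (1 - v l) := mul_one _
  -- a.e. bounds by constants (for integrability)
  have hg_bdd : ∀ᵐ v ∂μ, ‖g v‖ ≤ (k : ℝ) := by
    filter_upwards [hae, hg_nonneg, hg_le_one_terms] with v hv hnn hle
    rw [Real.norm_eq_abs, abs_of_nonneg hnn]
    calc g v ≤ ∑ j ∈ A, ∏ l ∈ A.erase j, (1 - v l) :=
          Finset.sum_le_sum hle
      _ ≤ ∑ _j ∈ A, (1 : ℝ) := by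
          apply Finset.sum_le_sum
          intro j _
          apply Finset.prod_le_one
          · intro l _; linarith [(hv l).2]
          · intro l _; linarith [(hv l).1]
      _ = (k : ℝ) := by simp [hk]
  have hh_bdd : ∀ᵐ v ∂μ, ‖h v‖ ≤ (k : ℝ) := by
    filter_upwards [hae] with v hv
    have h0 : ∀ l ∈ A, (0:ℝ) ≤ (1 - v l) ^ n := fun l hl =>
      pow_nonneg (by linarith [(hv l).2]) n
    have h1 : ∀ l ∈ A, (1 - v l) ^ n ≤ 1 := fun l hl =>
      pow_le_one₀ (by linarith [(hv l).2]) (by linarith [(hv l).1])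
    rw [Real.norm_eq_abs, abs_of_nonneg (Finset.sum_nonneg h0)]
    calc h v ≤ ∑ _l ∈ A, (1:ℝ) := Finset.sum_le_sum h1
      _ = (k : ℝ) := by simp [hk]
  have hg_int : Integrable g μ :=
    ⟨hg_meas.aestronglyMeasurable, HasFiniteIntegral.of_bounded hg_bdd⟩
  have hh_int : Integrable h μ :=
    ⟨hh_meas.aestronglyMeasurable, HasFiniteIntegral.of_bounded hh_bdd⟩
  -- the AM-GM pointwise bound g ≤ h a.e.
  have hgh : ∀ᵐ v ∂μ, g v ≤ h v := by
    filter_upwards [hae, hg_le_one_terms] with v hv hle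
    rcases eq_or_lt_of_le hk1 with h1 | h2
    · -- k = 1 : A = {j0}
      obtain ⟨j0, hj0⟩ := Finset.card_eq_one.mp h1.symm
      have hn0 : n = 0 := by omega
      simp only [hg, hh, hj0, hn0, Finset.sum_singleton, Finset.erase_singleton,
        Finset.prod_empty, one_mul, pow_zero]
      split <;> norm_num
    · -- k ≥ 2
      have hcard_erase : ∀ j ∈ A, (A.erase j).card = n := fun j hj => by
        rw [Finset.card_erase_of_mem hj]
      have hne : ∀ j ∈ A, (A.erase j).Nonempty := by
        intro j hj
        rw [← Finset.card_pos, hcard_erase j hj]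
        omega
      have hnR : (n : ℝ) ≠ 0 := by
        have : 1 ≤ n := by omega
        exact_mod_cast Nat.one_le_iff_ne_zero.mp this
      calc g v ≤ ∑ j ∈ A, ∏ l ∈ A.erase j, (1 - v l) := Finset.sum_le_sum hle
        _ ≤ ∑ j ∈ A, (∑ l ∈ A.erase j, (1 - v l) ^ n) / n := by
            apply Finset.sum_le_sum
            intro j hj
            have := prod_le_avg_pow (A.erase j) (hne j hj) (fun l => 1 - v l)
              (fun l hl => by show (0:ℝ) ≤ 1 - v l; linarith [(hv l).2])
            rwa [hcard_erase j hj] at this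
        _ = ∑ j ∈ A, ((∑ l ∈ A, (1 - v l) ^ n) - (1 - v j) ^ n) / n := by
            refine Finset.sum_congr rfl fun j hj => ?_
            congr 1
            have := Finset.sum_erase_add A (fun l => (1 - v l) ^ n) hj
            linarith
        _ = h v := by
            rw [← Finset.sum_div]
            rw [Finset.sum_sub_distrib, Finset.sum_const, hh]
            have hkn : (k : ℝ) = (n : ℝ) + 1 := by
              have : k = n + 1 := by omega
              exact_mod_cast this
            field_simp [hk]
            ring_nf
            rw [hkn]
            ring
  -- compute ∫ h = 1
  have hmarg_int : ∀ l ∈ A, ∫ v, (1 - v l) ^ n ∂μ = 1 / k := by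
    intro l _
    have hmeas : Measurable (fun x : ℝ => (1 - x) ^ n) :=
      (measurable_const.sub measurable_id).pow measurable_const
    have e1 : ∫ v, (1 - v l) ^ n ∂μ
        = ∫ x, (1 - x) ^ n ∂(μ.map (fun v => v l)) := by
      rw [integral_map (measurable_pi_apply l).aemeasurable hmeas.aestronglyMeasurable]
    rw [e1, hmarg l]
    have e2 : ∫ x in Set.Icc (0:ℝ) 1, (1 - x) ^ n = ∫ x in (0:ℝ)..1, (1 - x) ^ n := by
      rw [intervalIntegral.integral_of_le (by norm_num : (0:ℝ) ≤ 1),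
        MeasureTheory.integral_Icc_eq_integral_Ioc]
    rw [e2]
    have e3 : ∫ x in (0:ℝ)..1, (1 - x) ^ n = ∫ x in (0:ℝ)..1, x ^ n := by
      have := intervalIntegral.integral_comp_sub_left (a := (0:ℝ)) (b := (1:ℝ))
        (fun x => x ^ n) 1
      simpa using this
    rw [e3, integral_pow]
    have hkR : ((n:ℝ) + 1) = (k:ℝ) := by
      have hnk : n + 1 = k := by omega
      exact_mod_cast hnk
    rw [one_pow, zero_pow (Nat.succ_ne_zero n), hkR]
    norm_num
  have hint_h : ∫ v, h v ∂μ = 1 := by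
    rw [hh]
    rw [MeasureTheory.integral_finset_sum A (f := fun (l : Fin d) (v : Fin d → ℝ) => (1 - v l) ^ n) (fun l _ =>
      ⟨(((measurable_const.sub (measurable_pi_apply l)).pow
          measurable_const)).aestronglyMeasurable, by
        apply HasFiniteIntegral.of_bounded (C := (1:ℝ))
        filter_upwards [hae] with v hv
        rw [Real.norm_eq_abs, abs_of_nonneg (pow_nonneg (by linarith [(hv l).2]) n)]
        exact pow_le_one₀ (by linarith [(hv l).2]) (by linarith [(hv l).1])⟩)]
    rw [Finset.sum_congr rfl hmarg_int, Finset.sum_const]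
    have : (k : ℝ) ≠ 0 := by exact_mod_cast Nat.one_le_iff_ne_zero.mp hk1
    rw [nsmul_eq_mul, ← hk]
    field_simp
  -- bounds on the two pieces
  have hP0 : 0 ≤ ∏ l ∈ A, (1 - u l) :=
    Finset.prod_nonneg fun l _ => by linarith [(hu l).2]
  have hP1 : ∏ l ∈ A, (1 - u l) ≤ 1 :=
    Finset.prod_le_one (fun l _ => by linarith [(hu l).2])
      (fun l _ => by linarith [(hu l).1])
  have hI0 : 0 ≤ ∫ v, g v ∂μ := integral_nonneg_of_ae hg_nonneg
  have hI1 : ∫ v, g v ∂μ ≤ 1 := by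
    calc ∫ v, g v ∂μ ≤ ∫ v, h v ∂μ := integral_mono_ae hg_int hh_int hgh
      _ = 1 := hint_h
  rw [abs_le]
  constructor <;> [linarith; linarith]
end

section
/- Let b > 0, u ∈ [0,1], and set u₊ = min(u+b, 1), u₋ = max(u−b, 0), and L_b(u,v) = (min(u₊,v) − min(u₋,v))/(u₊ − u₋) for v ∈ [0,1]. Then for every v ∈ (0,1), |L_b(u,v) − 1(u ≤ v)| ≤ 1(u − b ≤ v) − 1(u + b ≤ v). -/
/-- Pointwise bound on the difference between the linear smoother `L_b(u,·)`
and the indicator `1(u ≤ ·)`: for `v ∈ (0,1)`,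
`|L_b(u,v) - 1(u ≤ v)| ≤ 1(u - b ≤ v) - 1(u + b ≤ v)`. -/
theorem abs_smoother_sub_indicator_le
    (b u : ℝ) (hb : 0 < b) (hu : u ∈ Set.Icc (0:ℝ) 1) :
    ∀ v ∈ Set.Ioo (0:ℝ) 1,
      |(min (min (u + b) 1) v - min (max (u - b) 0) v)
            / (min (u + b) 1 - max (u - b) 0)
          - (if u ≤ v then (1:ℝ) else 0)|
        ≤ (if u - b ≤ v then (1:ℝ) else 0) - (if u + b ≤ v then (1:ℝ) else 0) := by
  obtain ⟨hu0, hu1⟩ := hu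
  rintro v ⟨hv0, hv1⟩
  have hup : min (u + b) 1 ≤ u + b := min_le_left _ _
  have hup1 : min (u + b) 1 ≤ 1 := min_le_right _ _
  have hum : u - b ≤ max (u - b) 0 := le_max_left _ _
  have hum0 : (0:ℝ) ≤ max (u - b) 0 := le_max_right _ _
  have hd : 0 < min (u + b) 1 - max (u - b) 0 := by
    have : max (u - b) 0 < min (u + b) 1 := by
      apply max_lt <;> apply lt_min <;> linarith
    linarith
  rcases lt_or_ge v (max (u - b) 0) with h1 | h1
  · -- v < u₋, in fact v < u - b
    have hvb : v < u - b := by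
      by_contra h
      push_neg at h
      have : max (u - b) 0 ≤ v := max_le h (le_of_lt hv0)
      linarith
    rw [min_eq_right (le_of_lt h1), min_eq_right (le_trans (le_of_lt h1) (le_of_lt
      (by apply max_lt <;> apply lt_min <;> linarith : max (u - b) 0 < min (u + b) 1))),
      if_neg (by linarith), if_neg (by linarith), if_neg (by linarith)]
    simp
  · rcases lt_or_ge v (min (u + b) 1) with h2 | h2
    · -- u₋ ≤ v < u₊
      rw [min_eq_right (le_of_lt h2), min_eq_left h1]
      have ht0 : 0 ≤ (v - max (u - b) 0) / (min (u + b) 1 - max (u - b) 0) :=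
        div_nonneg (by linarith) (le_of_lt hd)
      have ht1 : (v - max (u - b) 0) / (min (u + b) 1 - max (u - b) 0) ≤ 1 :=
        (div_le_one hd).mpr (by linarith)
      rw [abs_le]
      split_ifs <;> constructor <;> linarith
    · -- u₊ ≤ v, hence u + b ≤ v
      have hub : u + b ≤ v := by
        rcases min_cases (u + b) 1 with ⟨h, _⟩ | ⟨h, h'⟩
        · linarith
        · linarith
      rw [min_eq_left h2, min_eq_left h1, div_self (ne_of_gt hd),
        if_pos (by linarith), if_pos (by linarith), if_pos hub]
      simp
end

section
/- Let b > 0 and u ∈ [0,1], with u₊ = min(u+b, 1), u₋ = max(u−b, 0), and L_b(u,v) = (min(u₊,v) − min(u₋,v))/(u₊ − u₋). Then ∫_0^1 |L_b(u,v) − 1(u ≤ v)| dv ≤ 2b, where the integral is with respect to Lebesgue measure on [0,1]. -/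
open MeasureTheory

/-- The `L¹([0,1])`-distance between the linear smoother `L_b(u,·)` and the
indicator `1(u ≤ ·)` is at most `2b`. -/
theorem integral_abs_smoother_sub_indicator_le
    (b u : ℝ) (hb : 0 < b) (hu : u ∈ Set.Icc (0:ℝ) 1) :
    (∫ v in Set.Icc (0:ℝ) 1,
        |(min (min (u + b) 1) v - min (max (u - b) 0) v)
              / (min (u + b) 1 - max (u - b) 0)
            - (if u ≤ v then (1:ℝ) else 0)|)
      ≤ 2 * b := by
  obtain ⟨hu0, hu1⟩ := hu
  set a := max (u - b) 0 with ha
  set c := min (u + b) 1 with hc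
  have hac : a < c := by
    apply max_lt <;> apply lt_min <;> linarith
  have hau : a ≤ u := max_le (by linarith) hu0
  have huc : u ≤ c := le_min (by linarith) hu1
  set f : ℝ → ℝ := fun v =>
    |(min c v - min a v) / (c - a) - (if u ≤ v then (1:ℝ) else 0)| with hf
  -- pointwise bound by the indicator of Icc a c
  have hbound : ∀ v, f v ≤ Set.indicator (Set.Icc a c) (fun _ => (1:ℝ)) v := by
    intro v
    by_cases hv : v ∈ Set.Icc a c
    · rw [Set.indicator_of_mem hv]
      have h1 : min a v ≤ min c v := min_le_min hac.le le_rfl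
      have h2 : min c v - min a v ≤ c - a := by
        rcases le_total v a with h | h
        · rw [min_eq_right (h.trans hac.le), min_eq_right h]; linarith
        · rw [min_eq_left h]
          have : min c v ≤ c := min_le_left _ _
          linarith
      have hL0 : 0 ≤ (min c v - min a v) / (c - a) :=
        div_nonneg (by linarith) (by linarith)
      have hL1 : (min c v - min a v) / (c - a) ≤ 1 :=
        (div_le_one (by linarith)).2 h2
      simp only [hf]
      rw [abs_le]
      split_ifs <;> constructor <;> linarith
    · rw [Set.indicator_of_notMem hv]
      rw [Set.mem_Icc, not_and_or, not_le, not_le] at hv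
      have : f v = 0 := by
        rcases hv with h | h
        · have h1 : min c v = v := min_eq_right (by linarith)
          have h2 : min a v = v := min_eq_right h.le
          have h3 : ¬ u ≤ v := by linarith
          simp [hf, h1, h2, h3]
        · have h1 : min c v = c := min_eq_left (by linarith)
          have h2 : min a v = a := min_eq_left (by linarith)
          have h3 : u ≤ v := by linarith
          simp [hf, h1, h2, h3, div_self (by linarith : c - a ≠ 0)]
      linarith [this]
  have hfnonneg : ∀ v, 0 ≤ f v := fun v => abs_nonneg _
  have hmeas : Measurable f := by
    apply Measurable.abs
    apply Measurable.sub
    · exact (((continuous_const.min continuous_id).sub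
        (continuous_const.min continuous_id)).div_const _).measurable
    · exact Measurable.ite (measurableSet_le measurable_const measurable_id)
        measurable_const measurable_const
  have hconst : IntegrableOn (fun _ => (1:ℝ)) (Set.Icc (0:ℝ) 1) :=
    integrableOn_const measure_Icc_lt_top.ne
  have hint : IntegrableOn f (Set.Icc (0:ℝ) 1) := by
    apply Integrable.mono' hconst hmeas.aestronglyMeasurable
    filter_upwards with v
    rw [Real.norm_eq_abs, abs_of_nonneg (hfnonneg v)]
    calc f v ≤ Set.indicator (Set.Icc a c) (fun _ => (1:ℝ)) v := hbound v
      _ ≤ 1 := Set.indicator_le_self' (fun _ _ => zero_le_one) v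
  have hintInd : IntegrableOn (Set.indicator (Set.Icc a c) (fun _ => (1:ℝ)))
      (Set.Icc (0:ℝ) 1) :=
    hconst.indicator measurableSet_Icc
  calc (∫ v in Set.Icc (0:ℝ) 1, f v)
      ≤ ∫ v in Set.Icc (0:ℝ) 1,
          Set.indicator (Set.Icc a c) (fun _ => (1:ℝ)) v :=
        setIntegral_mono_on hint hintInd measurableSet_Icc (fun v _ => hbound v)
    _ = ∫ _ in Set.Icc (0:ℝ) 1 ∩ Set.Icc a c, (1:ℝ) := by
        rw [setIntegral_indicator measurableSet_Icc]
    _ = (volume (Set.Icc (0:ℝ) 1 ∩ Set.Icc a c)).toReal := by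
        rw [setIntegral_const, smul_eq_mul, mul_one]; rfl
    _ ≤ (volume (Set.Icc a c)).toReal := by
        apply ENNReal.toReal_mono
        · rw [Real.volume_Icc]; exact ENNReal.ofReal_ne_top
        · exact measure_mono Set.inter_subset_right
    _ = c - a := by rw [Real.volume_Icc, ENNReal.toReal_ofReal (by linarith)]
    _ ≤ 2 * b := by
        have h1 : c ≤ u + b := min_le_left _ _
        have h2 : u - b ≤ a := le_max_left _ _
        linarith
end

section
/- Let x_1,…,x_n ∈ [0,1] and define the empirical distribution function F(u) = n^{−1} Σ_{i=1}^n 1(x_i ≤ u) for u ∈ [0,1], and its generalized inverse F^{−1}(u) = inf{v ∈ [0,1] : F(v) ≥ u} for u ∈ [0,1]. Then sup_{u∈[0,1]} |F^{−1}(u) − u| = sup_{u∈[0,1]} |F(u) − u|. -/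
/-- For the empirical c.d.f. `F` of points in `[0,1]` and its generalized
(quantile) inverse `F⁻¹`, the uniform distances to the identity coincide:
`sup_{u∈[0,1]} |F⁻¹(u) - u| = sup_{u∈[0,1]} |F(u) - u|`. -/
theorem sup_abs_quantile_eq_sup_abs_ecdf
    {n : ℕ} (hn : 1 ≤ n) (x : Fin n → ℝ) (hx : ∀ i, x i ∈ Set.Icc (0:ℝ) 1)
    (F : ℝ → ℝ)
    (hF : ∀ u, F u = (n : ℝ)⁻¹ * ∑ i, (if x i ≤ u then (1:ℝ) else 0))
    (Finv : ℝ → ℝ)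
    (hFinv : ∀ u, Finv u = sInf {v ∈ Set.Icc (0:ℝ) 1 | u ≤ F v}) :
    (⨆ u : Set.Icc (0:ℝ) 1, |Finv u - (u:ℝ)|)
      = ⨆ u : Set.Icc (0:ℝ) 1, |F u - (u:ℝ)| := by
  classical
  have hn0 : (0:ℝ) < n := by exact_mod_cast hn
  have hFmono : Monotone F := by
    intro a b hab
    rw [hF a, hF b]
    refine mul_le_mul_of_nonneg_left ?_ (by positivity)
    refine Finset.sum_le_sum fun i _ => ?_
    by_cases h : x i ≤ a
    · simp [h, h.trans hab]
    · simp only [if_neg h]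
      split <;> norm_num
  have hF0 : ∀ v, 0 ≤ F v := by
    intro v; rw [hF]
    refine mul_nonneg (by positivity) (Finset.sum_nonneg fun i _ => by split <;> norm_num)
  have hF1le : ∀ v, F v ≤ 1 := by
    intro v; rw [hF]
    have h1 : (∑ i, (if x i ≤ v then (1:ℝ) else 0)) ≤ ∑ _i : Fin n, (1:ℝ) :=
      Finset.sum_le_sum fun i _ => by split <;> norm_num
    have h2 : (∑ _i : Fin n, (1:ℝ)) = n := by simp
    calc (n:ℝ)⁻¹ * ∑ i, (if x i ≤ v then (1:ℝ) else 0)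
        ≤ (n:ℝ)⁻¹ * n := mul_le_mul_of_nonneg_left (h2 ▸ h1) (by positivity)
      _ = 1 := inv_mul_cancel₀ (ne_of_gt hn0)
  have hF1 : F 1 = 1 := by
    rw [hF, Finset.sum_congr rfl fun i _ => if_pos (hx i).2]
    simp
    exact inv_mul_cancel₀ (ne_of_gt hn0)
  set S : ℝ → Set ℝ := fun u => {v ∈ Set.Icc (0:ℝ) 1 | u ≤ F v} with hSdef
  have hFinv' : ∀ u, Finv u = sInf (S u) := hFinv
  have h1mem : ∀ u : ℝ, u ≤ 1 → 1 ∈ S u := fun u hu =>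
    ⟨⟨zero_le_one, le_rfl⟩, by simpa [hF1] using hu⟩
  have hbdd : ∀ u, BddBelow (S u) := fun u => ⟨0, fun v hv => hv.1.1⟩
  have hFinv_mem : ∀ u : ℝ, u ≤ 1 → Finv u ∈ Set.Icc (0:ℝ) 1 := by
    intro u hu
    rw [hFinv']
    exact ⟨le_csInf ⟨1, h1mem u hu⟩ fun v hv => hv.1.1, csInf_le (hbdd u) (h1mem u hu)⟩
  have hFinv_le : ∀ u w : ℝ, w ∈ Set.Icc (0:ℝ) 1 → u ≤ F w → Finv u ≤ w := by
    intro u w hw hFw; rw [hFinv']; exact csInf_le (hbdd u) ⟨hw, hFw⟩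
  have hnotmem : ∀ u w : ℝ, w ∈ Set.Icc (0:ℝ) 1 → w < Finv u → F w < u := by
    intro u w hw hlt
    by_contra h
    push_neg at h
    exact absurd (hFinv_le u w hw h) (not_le.mpr hlt)
  have hFinv_ge : ∀ u : ℝ, u ≤ 1 → (∀ w ∈ S u, u ≤ w) → u ≤ Finv u := by
    intro u hu h
    rw [hFinv']
    exact le_csInf ⟨1, h1mem u hu⟩ h
  -- attainment : F (Finv u) ≥ u
  have hattain : ∀ u : ℝ, u ≤ 1 → u ≤ F (Finv u) := by
    intro u hu
    set c := Finv u with hc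
    have hne : Nonempty (Fin n) := ⟨⟨0, hn⟩⟩
    obtain ⟨i0⟩ := hne
    set ε := Finset.univ.inf' (show (Finset.univ : Finset (Fin n)).Nonempty from ⟨i0, Finset.mem_univ i0⟩)
      (fun i => if c < x i then x i - c else 1) with hε
    have hεpos : 0 < ε := by
      rw [hε, Finset.lt_inf'_iff]
      intro i _
      split
      · next h => linarith
      · norm_num
    have hεle : ∀ i, c < x i → ε ≤ x i - c := by
      intro i h
      calc ε ≤ (if c < x i then x i - c else 1) :=
            Finset.inf'_le _ (Finset.mem_univ i)
        _ = x i - c := if_pos h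
    have hsame : F c = F (c + ε/2) := by
      rw [hF, hF]
      congr 1
      refine Finset.sum_congr rfl fun i _ => ?_
      by_cases h : x i ≤ c
      · rw [if_pos h, if_pos (by linarith)]
      · push_neg at h
        have := hεle i h
        rw [if_neg (not_le.mpr h), if_neg (by push_neg; linarith)]
    have hlt : sInf (S u) < c + ε/2 := by
      rw [hc, hFinv'] at *
      linarith
    obtain ⟨w, hwS, hwlt⟩ := exists_lt_of_csInf_lt ⟨1, h1mem u hu⟩ hlt
    calc u ≤ F w := hwS.2
      _ ≤ F (c + ε/2) := hFmono hwlt.le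
      _ = F c := hsame.symm
  haveI : Nonempty (Set.Icc (0:ℝ) 1) :=
    ⟨⟨0, ⟨le_rfl, zero_le_one⟩⟩⟩
  have hbA : BddAbove (Set.range fun u : Set.Icc (0:ℝ) 1 => |F u - (u:ℝ)|) := by
    refine ⟨1, ?_⟩
    rintro _ ⟨u, rfl⟩
    have h1 := hF0 u
    have h2 := hF1le u
    have h3 := u.2.1
    have h4 := u.2.2
    rw [abs_le]
    constructor <;> simp <;> linarith
  have hbB : BddAbove (Set.range fun u : Set.Icc (0:ℝ) 1 => |Finv u - (u:ℝ)|) := by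
    refine ⟨1, ?_⟩
    rintro _ ⟨u, rfl⟩
    have h1 := hFinv_mem u u.2.2
    have h3 := u.2.1
    have h4 := u.2.2
    rw [abs_le]
    obtain ⟨h1a, h1b⟩ := h1
    constructor <;> simp <;> linarith
  apply le_antisymm
  · -- B ≤ A
    refine ciSup_le fun u => ?_
    have hc01 := hFinv_mem u u.2.2
    rcases le_or_gt (Finv u) (u:ℝ) with hle | hlt
    · have hat := hattain u u.2.2
      have heq : |Finv (u:ℝ) - (u:ℝ)| = (u:ℝ) - Finv (u:ℝ) := by
        rw [abs_sub_comm]; exact abs_of_nonneg (by linarith)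
      rw [heq]
      have hsup := le_ciSup hbA ⟨Finv (u:ℝ), hc01⟩
      simp only at hsup
      calc (u:ℝ) - Finv (u:ℝ) ≤ F (Finv (u:ℝ)) - Finv (u:ℝ) := by linarith
        _ ≤ |F (Finv (u:ℝ)) - Finv (u:ℝ)| := le_abs_self _
        _ ≤ _ := hsup
    · rw [abs_of_pos (by linarith)]
      refine le_of_forall_pos_le_add fun ε hε => ?_
      obtain ⟨c, hc⟩ : ∃ c : ℝ, c = Finv (u:ℝ) := ⟨_, rfl⟩
      rw [← hc] at hlt hc01 ⊢
      obtain ⟨δ, hδ⟩ : ∃ δ : ℝ, δ = min ε (c - (u:ℝ)) := ⟨_, rfl⟩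
      have hδpos : 0 < δ := hδ ▸ lt_min hε (by linarith)
      have hδ1 : δ ≤ ε := hδ ▸ min_le_left _ _
      have hδ2 : δ ≤ c - (u:ℝ) := hδ ▸ min_le_right _ _
      obtain ⟨w, hw⟩ : ∃ w : ℝ, w = c - δ/2 := ⟨_, rfl⟩
      have hwu : (u:ℝ) < w := by rw [hw]; linarith
      have hwc : w < c := by rw [hw]; linarith
      rw [hc] at hwc
      have hw01 : w ∈ Set.Icc (0:ℝ) 1 :=
        ⟨le_trans u.2.1 hwu.le, hwc.le.trans ((hc ▸ hc01 : Finv (u:ℝ) ∈ Set.Icc (0:ℝ) 1).2)⟩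
      have hFw : F w < (u:ℝ) := hnotmem _ _ hw01 hwc
      rw [← hc] at hwc
      have hkey : w - (u:ℝ) ≤ |F w - w| := by
        rw [abs_sub_comm]
        calc w - (u:ℝ) ≤ w - F w := by linarith
          _ ≤ |w - F w| := le_abs_self _
      have hsup := le_ciSup hbA ⟨w, hw01⟩
      simp only at hsup
      calc c - (u:ℝ) = (w - (u:ℝ)) + δ/2 := by rw [hw]; ring
        _ ≤ |F w - w| + ε := by linarith
        _ ≤ _ + ε := by linarith [hsup]
  · -- A ≤ B
    refine ciSup_le fun u => ?_
    set y := F (u:ℝ) with hy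
    have hy01 : y ∈ Set.Icc (0:ℝ) 1 := ⟨hF0 _, hF1le _⟩
    rcases le_or_gt (u:ℝ) y with hle | hlt
    · have hFy : Finv y ≤ (u:ℝ) := hFinv_le y (u:ℝ) u.2 le_rfl
      have heq : |F (u:ℝ) - (u:ℝ)| = y - (u:ℝ) := abs_of_nonneg (by linarith)
      rw [heq]
      have hsup := le_ciSup hbB ⟨y, hy01⟩
      simp only at hsup
      calc y - (u:ℝ) ≤ y - Finv y := by linarith
        _ ≤ |Finv y - y| := by rw [abs_sub_comm]; exact le_abs_self _
        _ ≤ _ := hsup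
    · rw [abs_of_neg (by linarith), neg_sub]
      refine le_of_forall_pos_le_add fun ε hε => ?_
      obtain ⟨δ, hδ⟩ : ∃ δ : ℝ, δ = min ε ((u:ℝ) - y) := ⟨_, rfl⟩
      have hδpos : 0 < δ := hδ ▸ lt_min hε (by linarith)
      have hδ1 : δ ≤ ε := hδ ▸ min_le_left _ _
      have hδ2 : δ ≤ (u:ℝ) - y := hδ ▸ min_le_right _ _
      obtain ⟨t, ht⟩ : ∃ t : ℝ, t = y + δ/2 := ⟨_, rfl⟩
      have hty : y < t := by rw [ht]; linarith
      have htu : t < (u:ℝ) := by rw [ht]; linarith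
      have ht01 : t ∈ Set.Icc (0:ℝ) 1 :=
        ⟨le_trans hy01.1 hty.le, htu.le.trans u.2.2⟩
      have hge : (u:ℝ) ≤ Finv t := by
        rw [hFinv']
        refine le_csInf ⟨1, h1mem t ht01.2⟩ fun w hwS => ?_
        by_contra hcon
        push_neg at hcon
        have : F w ≤ y := hy ▸ hFmono hcon.le
        have := hwS.2
        linarith
      have hkey : (u:ℝ) - t ≤ |Finv t - t| := by
        calc (u:ℝ) - t ≤ Finv t - t := by linarith
          _ ≤ |Finv t - t| := le_abs_self _
      have hsup := le_ciSup hbB ⟨t, ht01⟩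
      simp only at hsup
      calc (u:ℝ) - y = ((u:ℝ) - t) + δ/2 := by rw [ht]; ring
        _ ≤ |Finv t - t| + ε := by linarith
        _ ≤ _ + ε := by linarith [hsup]
end

section
/- Let μ be a probability measure on [0,1]^d whose pushforward under each coordinate projection v ↦ v_l is the uniform (Lebesgue) distribution on [0,1], let A ⊆ {1,…,d} be nonempty and j ∈ A. Define G(t) = ∫_{[0,1]^d} ∏_{l∈A\{j}} (1 − v_l)·1(t ≤ v_j) dμ(v) for t ∈ [0,1]. Then G is Lipschitz continuous with constant 1 (in particular continuous) and strictly decreasing on [0,1]. -/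
open MeasureTheory

/-- For a copula measure `μ` (uniform margins), the centering function
`G(t) = ∫ ∏_{l∈A\{j}}(1-v_l)·1(t ≤ v_j) dμ(v)` is `1`-Lipschitz (hence
continuous) and strictly decreasing on `[0,1]`. -/
theorem centering_function_lipschitz_strictAnti
    {d : ℕ} (μ : Measure (Fin d → ℝ)) [IsProbabilityMeasure μ]
    (hmarg : ∀ l : Fin d, μ.map (fun v => v l) = volume.restrict (Set.Icc (0:ℝ) 1))
    (A : Finset (Fin d)) (hA : A.Nonempty) (j : Fin d) (hj : j ∈ A)
    (G : ℝ → ℝ)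
    (hG : ∀ t, G t = ∫ v, (∏ l ∈ A.erase j, (1 - v l))
        * (if t ≤ v j then (1:ℝ) else 0) ∂μ) :
    LipschitzOnWith 1 G (Set.Icc (0:ℝ) 1) ∧ StrictAntiOn G (Set.Icc (0:ℝ) 1) := by
  classical
  set P : (Fin d → ℝ) → ℝ := fun v => ∏ l ∈ A.erase j, (1 - v l) with hPdef
  have hPm : Measurable P :=
    Finset.measurable_prod _ (fun l _ => measurable_const.sub (measurable_pi_apply l))
  -- a.e. each coordinate is in [0,1)
  have hae : ∀ᵐ v ∂μ, ∀ l : Fin d, v l ∈ Set.Ico (0:ℝ) 1 := by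
    rw [ae_all_iff]
    intro l
    have hm : Measurable (fun v : Fin d → ℝ => v l) := measurable_pi_apply l
    rw [ae_iff]
    have h1 : {v : Fin d → ℝ | ¬ v l ∈ Set.Ico (0:ℝ) 1}
        = (fun v : Fin d → ℝ => v l) ⁻¹' (Set.Ico (0:ℝ) 1)ᶜ := rfl
    rw [h1, Measure.map_apply hm measurableSet_Ico.compl |>.symm, hmarg l,
      Measure.restrict_apply measurableSet_Ico.compl]
    have h2 : (Set.Ico (0:ℝ) 1)ᶜ ∩ Set.Icc (0:ℝ) 1 = {1} := by
      rw [Set.inter_comm, ← Set.diff_eq, Set.Icc_diff_Ico_same (by norm_num : (0:ℝ) ≤ 1)]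
    rw [h2]
    exact measure_singleton 1
  have hP01 : ∀ v : Fin d → ℝ, (∀ l : Fin d, v l ∈ Set.Ico (0:ℝ) 1) →
      0 < P v ∧ P v ≤ 1 := by
    intro v hv
    constructor
    · exact Finset.prod_pos (fun l _ => by have := (hv l).2; linarith)
    · exact Finset.prod_le_one (fun l _ => by have := (hv l).2; linarith)
        (fun l _ => by have := (hv l).1; linarith)
  set F : ℝ → (Fin d → ℝ) → ℝ := fun t v => P v * (if t ≤ v j then 1 else 0) with hFdef
  have hFm : ∀ t, Measurable (F t) := fun t =>
    hPm.mul (Measurable.ite (measurableSet_le measurable_const (measurable_pi_apply j))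
      measurable_const measurable_const)
  have hFi : ∀ t, Integrable (F t) μ := by
    intro t
    apply Integrable.mono' (integrable_const (1:ℝ)) (hFm t).aestronglyMeasurable
    filter_upwards [hae] with v hv
    obtain ⟨h0, h1⟩ := hP01 v hv
    rw [Real.norm_eq_abs, abs_mul]
    have : |P v| ≤ 1 := by rw [abs_of_pos h0]; exact h1
    split_ifs <;> simp <;> nlinarith [abs_nonneg (P v)]
  -- the main quantitative facts
  have main : ∀ s t : ℝ, s ∈ Set.Icc (0:ℝ) 1 → t ∈ Set.Icc (0:ℝ) 1 → s ≤ t →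
      0 ≤ G s - G t ∧ G s - G t ≤ t - s ∧ (s < t → 0 < G s - G t) := by
    intro s t hs ht hst
    set g : (Fin d → ℝ) → ℝ := fun v => P v * (if s ≤ v j ∧ v j < t then 1 else 0) with hgdef
    have hkey : ∀ v, F s v - F t v = g v := by
      intro v
      simp only [hgdef, hFdef]
      by_cases h1 : s ≤ v j
      · by_cases h2 : t ≤ v j
        · rw [if_pos h1, if_pos h2, if_neg (by push_neg; intro _; linarith)]
          ring
        · rw [if_pos h1, if_neg h2, if_pos ⟨h1, not_le.mp h2⟩]
          ring
      · rw [if_neg h1, if_neg (fun h2 => h1 (le_trans hst h2)),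
          if_neg (fun h => h1 h.1)]
        ring
    have hgi : Integrable g μ := ((hFi s).sub (hFi t)).congr
      (Filter.Eventually.of_forall hkey)
    have hdiff : G s - G t = ∫ v, g v ∂μ := by
      rw [hG s, hG t, ← integral_sub (hFi s) (hFi t)]
      exact integral_congr_ae (Filter.Eventually.of_forall hkey)
    -- the set where the indicator is 1
    set S : Set (Fin d → ℝ) := (fun v : Fin d → ℝ => v j) ⁻¹' Set.Ico s t with hSdef
    have hSmeas : MeasurableSet S := (measurable_pi_apply j) measurableSet_Ico
    have hSmem : ∀ v, v ∈ S ↔ (s ≤ v j ∧ v j < t) := fun v => Set.mem_Ico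
    have hSmeasure : μ S = ENNReal.ofReal (t - s) := by
      rw [hSdef, ← Measure.map_apply (measurable_pi_apply j) measurableSet_Ico,
        hmarg j, Measure.restrict_apply measurableSet_Ico]
      have hsub : Set.Ico s t ∩ Set.Icc (0:ℝ) 1 = Set.Ico s t := by
        apply Set.inter_eq_left.mpr
        intro x hx
        exact ⟨le_trans hs.1 hx.1, le_trans (le_of_lt hx.2) ht.2⟩
      rw [hsub, Real.volume_Ico]
    have hnn : 0 ≤ᵐ[μ] g := by
      filter_upwards [hae] with v hv
      obtain ⟨h0, _⟩ := hP01 v hv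
      simp only [hgdef, Pi.zero_apply]
      split_ifs <;> nlinarith
    have hnonneg : 0 ≤ G s - G t := by
      rw [hdiff]; exact integral_nonneg_of_ae hnn
    -- upper bound
    have hind : Integrable (fun v => if s ≤ v j ∧ v j < t then (1:ℝ) else 0) μ := by
      apply Integrable.mono' (integrable_const (1:ℝ))
      · apply Measurable.aestronglyMeasurable
        apply Measurable.ite _ measurable_const measurable_const
        have he : {v : Fin d → ℝ | s ≤ v j ∧ v j < t} = S := by
          ext v; exact (hSmem v).symm
        rw [he]; exact hSmeas
      · filter_upwards with v
        split_ifs <;> simp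
    have hindval : ∫ v, (if s ≤ v j ∧ v j < t then (1:ℝ) else 0) ∂μ = (μ S).toReal := by
      have heq : (fun v => if s ≤ v j ∧ v j < t then (1:ℝ) else 0)
          = S.indicator (fun _ => (1:ℝ)) := by
        funext v
        rw [Set.indicator_apply]
        simp [hSmem v]
      rw [heq, integral_indicator_const (1:ℝ) hSmeas, smul_eq_mul, mul_one, Measure.real]
    have hub : G s - G t ≤ t - s := by
      rw [hdiff]
      calc ∫ v, g v ∂μ ≤ ∫ v, (if s ≤ v j ∧ v j < t then (1:ℝ) else 0) ∂μ := by
            apply integral_mono_ae hgi hind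
            filter_upwards [hae] with v hv
            obtain ⟨h0, h1⟩ := hP01 v hv
            simp only [hgdef]
            split_ifs <;> nlinarith
        _ = (μ S).toReal := hindval
        _ = t - s := by rw [hSmeasure, ENNReal.toReal_ofReal (by linarith)]
    refine ⟨hnonneg, hub, fun hlt => ?_⟩
    -- strict positivity
    rw [hdiff]
    rw [integral_pos_iff_support_of_nonneg_ae hnn hgi]
    set N : Set (Fin d → ℝ) := {v | ¬ ∀ l : Fin d, v l ∈ Set.Ico (0:ℝ) 1} with hNdef
    have hN : μ N = 0 := by rw [← ae_iff] at *; exact hae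
    have hsub : S \ N ⊆ Function.support g := by
      intro v hv
      have hvS := (hSmem v).mp hv.1
      have hvN : ∀ l : Fin d, v l ∈ Set.Ico (0:ℝ) 1 := not_not.mp hv.2
      obtain ⟨h0, _⟩ := hP01 v hvN
      simp only [Function.mem_support, hgdef, if_pos hvS, mul_one]
      exact ne_of_gt h0
    calc (0:ENNReal) < ENNReal.ofReal (t - s) := by
          simp [ENNReal.ofReal_pos]; linarith
      _ = μ S := hSmeasure.symm
      _ = μ (S \ N) := (measure_diff_null hN).symm
      _ ≤ μ (Function.support g) := measure_mono hsub
  constructor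
  · apply LipschitzOnWith.of_dist_le_mul
    intro x hx y hy
    rw [Real.dist_eq, Real.dist_eq, NNReal.coe_one, one_mul]
    rcases le_total x y with h | h
    · obtain ⟨h0, h1, _⟩ := main x y hx hy h
      rw [abs_sub_comm x y, abs_of_nonneg (by linarith : (0:ℝ) ≤ y - x), abs_le]
      constructor <;> linarith
    · obtain ⟨h0, h1, _⟩ := main y x hy hx h
      rw [abs_of_nonneg (by linarith : (0:ℝ) ≤ x - y), abs_le]
      constructor <;> linarith
  · intro s hs t ht hst
    obtain ⟨_, _, h⟩ := main s t hs ht hst.le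
    have := h hst
    linarith
end

section
/- Let d ≥ 1 and let X_1, X_2, … be i.i.d. random vectors with values in ℝ^d whose marginal cumulative distribution functions F_1,…,F_d are continuous, defined on a probability space (Ω, F, P). For each n and i,j, let R_{ij} = Σ_{t=1}^n 1(X_{tj} ≤ X_{ij}) and Û_i = (R_{i1}/n,…,R_{id}/n) ∈ [0,1]^d. For a nonempty A ⊆ {1,…,d} define the empirical quantity Î_{n,A}(u) = ∏_{l∈A}(1−u_l) − n^{−1} Σ_{t=1}^n Σ_{j∈A} ∏_{l∈A\{j}} (1 − Û_{tl})·1(u_j ≤ Û_{tj}), let Î_n(u) be the vector (Î_{n,A}(u))_{A nonempty} in ℝ^{2^d−1}, and let f : ℝ^{2^d−1} → ℝ be a linear map. Define the estimator σ̂²_n = n^{−1} Σ_{i=1}^n [ f( Î_n(Û_i) − n^{−1} Σ_{t=1}^n Î_n(Û_t) ) ]². Let U_1 = (F_1(X_{11}),…,F_d(X_{1d})), let μ be the law of U_1, and let I_{μ,A}(u) = ∏_{l∈A}(1−u_l) − ∫ Σ_{j∈A} ∏_{l∈A\{j}}(1−v_l)·1(u_j ≤ v_j) dμ(v), with I_μ(u)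 the vector (I_{μ,A}(u))_{A nonempty}. Then σ̂²_n converges in probability, as n → ∞, to the variance Var(f(I_μ(U_1))). -/
open MeasureTheory ProbabilityTheory Filter Topology

lemma aux_abs_prod_sub_prod {ι : Type*} (s : Finset ι) (a b : ι → ℝ)
    (ha : ∀ i ∈ s, a i ∈ Set.Icc (0:ℝ) 1) (hb : ∀ i ∈ s, b i ∈ Set.Icc (0:ℝ) 1) :
    |(∏ i ∈ s, a i) - ∏ i ∈ s, b i| ≤ ∑ i ∈ s, |a i - b i| := by
  classical
  induction s using Finset.cons_induction with
  | empty => simp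
  | cons j s hj ih =>
    rw [Finset.prod_cons, Finset.prod_cons, Finset.sum_cons]
    have haj := ha j (Finset.mem_cons_self j s)
    have hbj := hb j (Finset.mem_cons_self j s)
    have ha' : ∀ i ∈ s, a i ∈ Set.Icc (0:ℝ) 1 := fun i hi => ha i (Finset.mem_cons_of_mem hi)
    have hb' : ∀ i ∈ s, b i ∈ Set.Icc (0:ℝ) 1 := fun i hi => hb i (Finset.mem_cons_of_mem hi)
    have hpa : (∏ i ∈ s, a i) ∈ Set.Icc (0:ℝ) 1 :=
      ⟨Finset.prod_nonneg (fun i hi => (ha' i hi).1),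
       Finset.prod_le_one (fun i hi => (ha' i hi).1) (fun i hi => (ha' i hi).2)⟩
    have key : a j * ∏ i ∈ s, a i - b j * ∏ i ∈ s, b i
        = (a j - b j) * (∏ i ∈ s, a i) + b j * ((∏ i ∈ s, a i) - ∏ i ∈ s, b i) := by ring
    rw [key]
    refine le_trans (abs_add_le _ _) ?_
    rw [abs_mul, abs_mul]
    have h1 : |a j - b j| * |∏ i ∈ s, a i| ≤ |a j - b j| * 1 := by
      apply mul_le_mul_of_nonneg_left _ (abs_nonneg _)
      rw [abs_le]; exact ⟨le_trans (by norm_num) hpa.1, hpa.2⟩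
    have h2 : |b j| * |(∏ i ∈ s, a i) - ∏ i ∈ s, b i| ≤ 1 * (∑ i ∈ s, |a i - b i|) := by
      apply mul_le_mul (by rw [abs_le]; exact ⟨le_trans (by norm_num) hbj.1, hbj.2⟩)
        (ih ha' hb') (abs_nonneg _) (by norm_num)
    rw [mul_one] at h1; rw [one_mul] at h2
    linarith

lemma aux_tendsto_of_small (a : ℕ → ℝ) (h : ∀ δ : ℝ, 0 < δ → ∀ᶠ n in atTop, |a n| ≤ δ) :
    Tendsto a atTop (𝓝 0) := by
  rw [NormedAddCommGroup.tendsto_nhds_zero]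
  intro ε hε
  filter_upwards [h (ε/2) (by linarith)] with n hn
  rw [Real.norm_eq_abs]
  linarith

lemma aux_polya_mono (K : ℕ → ℝ → ℝ) (k : ℝ → ℝ)
    (hK : ∀ n, Monotone (K n))
    (hkl : ∀ s t : ℝ, |k s - k t| ≤ |s - t|)
    (hconv : ∀ q : ℚ, Tendsto (fun n => K n (q:ℝ)) atTop (𝓝 (k (q:ℝ))))
    {δ : ℝ} (hδ : 0 < δ) :
    ∀ᶠ n in atTop, ∀ s ∈ Set.Icc (0:ℝ) 1, |K n s - k s| ≤ δ := by
  obtain ⟨m, hm⟩ := exists_nat_one_div_lt (show (0:ℝ) < δ/2 by linarith)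
  set M : ℕ := m + 1 with hMdef
  have hM : (1:ℝ)/M < δ/2 := by
    have : ((m:ℝ) + 1) = (M:ℝ) := by push_cast [hMdef]; ring
    rwa [this] at hm
  have hMpos : (0:ℝ) < M := by positivity
  have Hgrid : ∀ᶠ n in atTop, ∀ r ∈ Finset.range (M+2),
      |K n ((r:ℝ)/M) - k ((r:ℝ)/M)| ≤ δ/2 := by
    rw [Filter.eventually_all_finset]
    intro r _
    have h := hconv ((r : ℚ)/(M:ℚ))
    have hcast : (((r:ℚ)/(M:ℚ) : ℚ) : ℝ) = (r:ℝ)/M := by push_cast; ring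
    rw [hcast] at h
    have h0 : Tendsto (fun n => K n ((r:ℝ)/M) - k ((r:ℝ)/M)) atTop (𝓝 0) :=
      tendsto_sub_nhds_zero_iff.2 h
    filter_upwards [(NormedAddCommGroup.tendsto_nhds_zero.1 h0) (δ/2) (by linarith)] with n hn
    rw [Real.norm_eq_abs] at hn; exact hn.le
  filter_upwards [Hgrid] with n hn s hs
  obtain ⟨hs0, hs1⟩ := hs
  set r : ℕ := ⌊s * M⌋₊ with hrdef
  have hr1 : (r:ℝ) ≤ s * M := Nat.floor_le (by positivity)
  have hr2 : s * M < (r:ℝ) + 1 := Nat.lt_floor_add_one (s*M)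
  have hrM : r ≤ M := by
    have h' : (r:ℝ) ≤ (M:ℝ) := le_trans hr1 (by nlinarith)
    exact_mod_cast h'
  have hlo : (r:ℝ)/M ≤ s := by rw [div_le_iff₀ hMpos]; linarith
  have hhi : s ≤ ((r:ℝ)+1)/M := by rw [le_div_iff₀ hMpos]; linarith
  have hmemlo : r ∈ Finset.range (M+2) := Finset.mem_range.2 (by omega)
  have hmemhi : r+1 ∈ Finset.range (M+2) := Finset.mem_range.2 (by omega)
  have Hlo := abs_le.1 (hn r hmemlo)
  have Hhi' := hn (r+1) hmemhi
  have hcast2 : (((r+1:ℕ)):ℝ) = (r:ℝ)+1 := by push_cast; ring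
  rw [hcast2] at Hhi'
  have Hhi := abs_le.1 Hhi'
  have hklo := abs_le.1 (hkl ((r:ℝ)/M) s)
  have hkhi := abs_le.1 (hkl (((r:ℝ)+1)/M) s)
  have hsplit : ((r:ℝ)+1)/M = (r:ℝ)/M + 1/M := by ring
  have habslo : |(r:ℝ)/M - s| ≤ 1/M := by
    rw [abs_le]
    constructor
    · linarith
    · linarith [one_div_pos.2 hMpos]
  have habshi : |((r:ℝ)+1)/M - s| ≤ 1/M := by
    rw [abs_le]
    constructor
    · linarith [one_div_pos.2 hMpos]
    · linarith
  have hup : K n s - k s ≤ δ := by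
    have h1 : K n s ≤ K n (((r:ℝ)+1)/M) := hK n hhi
    have h2 : k (((r:ℝ)+1)/M) - k s ≤ |(((r:ℝ)+1)/M) - s| := by
      have := hkl (((r:ℝ)+1)/M) s
      exact le_trans (le_abs_self _) this
    linarith [Hhi.2]
  have hdn : k s - K n s ≤ δ := by
    have h1 : K n ((r:ℝ)/M) ≤ K n s := hK n hlo
    have h2 : k s - k ((r:ℝ)/M) ≤ |(r:ℝ)/M - s| := by
      have := hkl s ((r:ℝ)/M)
      have h3 := le_trans (le_abs_self _) this
      rwa [abs_sub_comm] at h3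
    linarith [Hlo.1]
  rw [abs_le]; constructor <;> linarith

lemma aux_polya_anti (K : ℕ → ℝ → ℝ) (k : ℝ → ℝ)
    (hK : ∀ n, Antitone (K n))
    (hkl : ∀ s t : ℝ, |k s - k t| ≤ |s - t|)
    (hconv : ∀ q : ℚ, Tendsto (fun n => K n (q:ℝ)) atTop (𝓝 (k (q:ℝ))))
    {δ : ℝ} (hδ : 0 < δ) :
    ∀ᶠ n in atTop, ∀ s ∈ Set.Icc (0:ℝ) 1, |K n s - k s| ≤ δ := by
  have h := aux_polya_mono (fun n s => K n (1 - s)) (fun s => k (1 - s))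
    (fun n s t hst => hK n (by linarith))
    (fun s t => by simpa [abs_sub_comm] using hkl (1-s) (1-t))
    (fun q => by
      have h := hconv ((1:ℚ) - q)
      have hc : (((1:ℚ) - q : ℚ):ℝ) = 1 - (q:ℝ) := by push_cast; ring
      rwa [hc] at h) hδ
  filter_upwards [h] with n hn s hs
  have := hn (1 - s) ⟨by linarith [hs.2], by linarith [hs.1]⟩
  simpa using this

lemma aux_sample_var {z : ℕ → ℕ → ℝ} {y : ℕ → ℝ} {m m2 B : ℝ}
    (hB : ∀ i, |y i| ≤ B)
    (hclose : ∀ δ : ℝ, 0 < δ → ∀ᶠ n in atTop, ∀ i < n, |z n i - y i| ≤ δ)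
    (hm : Tendsto (fun n : ℕ => (n:ℝ)⁻¹ * ∑ i ∈ Finset.range n, y i) atTop (𝓝 m))
    (hm2 : Tendsto (fun n : ℕ => (n:ℝ)⁻¹ * ∑ i ∈ Finset.range n, (y i)^2) atTop (𝓝 m2)) :
    Tendsto (fun n : ℕ => (n:ℝ)⁻¹ * ∑ i ∈ Finset.range n,
      (z n i - (n:ℝ)⁻¹ * ∑ t ∈ Finset.range n, z n t)^2) atTop (𝓝 (m2 - m^2)) := by
  have hB0 : 0 ≤ B := le_trans (abs_nonneg _) (hB 0)
  set zbar : ℕ → ℝ := fun n : ℕ => (n:ℝ)⁻¹ * ∑ t ∈ Finset.range n, z n t with hzbar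
  set ybar : ℕ → ℝ := fun n : ℕ => (n:ℝ)⁻¹ * ∑ t ∈ Finset.range n, y t with hybar
  -- averaging bound helper
  have havg : ∀ (w : ℕ → ℕ → ℝ) (δ : ℝ), 0 ≤ δ → ∀ n : ℕ, (∀ i < n, |w n i| ≤ δ) →
      |(n:ℝ)⁻¹ * ∑ i ∈ Finset.range n, w n i| ≤ δ := by
    intro w δ hδ n hw
    rcases Nat.eq_zero_or_pos n with hn | hn
    · simp [hn, hδ]
    have h1 : |∑ i ∈ Finset.range n, w n i| ≤ ∑ i ∈ Finset.range n, |w n i| :=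
      Finset.abs_sum_le_sum_abs _ _
    have h2 : ∑ i ∈ Finset.range n, |w n i| ≤ ∑ i ∈ Finset.range n, δ :=
      Finset.sum_le_sum (fun i hi => hw i (Finset.mem_range.1 hi))
    rw [Finset.sum_const, Finset.card_range, nsmul_eq_mul] at h2
    have hn0 : (0:ℝ) < n := by exact_mod_cast hn
    rw [abs_mul, abs_inv, Nat.abs_cast]
    calc (n:ℝ)⁻¹ * |∑ i ∈ Finset.range n, w n i| ≤ (n:ℝ)⁻¹ * (n * δ) := by
          apply mul_le_mul_of_nonneg_left (le_trans h1 h2) (by positivity)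
      _ = δ := by field_simp
  -- zbar tends to m
  have hzz : Tendsto (fun n => zbar n - ybar n) atTop (𝓝 0) := by
    apply aux_tendsto_of_small
    intro δ hδ
    filter_upwards [hclose δ hδ] with n hn
    have : zbar n - ybar n = (n:ℝ)⁻¹ * ∑ i ∈ Finset.range n, (z n i - y i) := by
      rw [hzbar, hybar]; rw [Finset.sum_sub_distrib]; ring
    rw [this]
    exact havg (fun n i => z n i - y i) δ hδ.le n hn
  have hzbar_m : Tendsto zbar atTop (𝓝 m) := by
    have := hzz.add hm
    simpa using this
  -- second moment
  have hS2 : Tendsto (fun n : ℕ => (n:ℝ)⁻¹ * ∑ i ∈ Finset.range n, (z n i)^2) atTop (𝓝 m2) := by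
    have hdiff : Tendsto (fun n : ℕ => (n:ℝ)⁻¹ * ∑ i ∈ Finset.range n, ((z n i)^2 - (y i)^2))
        atTop (𝓝 0) := by
      apply aux_tendsto_of_small
      intro δ hδ
      have hC : (0:ℝ) < 2*B + 1 := by linarith
      have hδ' : 0 < min 1 (δ / (2*B+1)) := lt_min one_pos (by positivity)
      filter_upwards [hclose _ hδ'] with n hn
      refine havg (fun n i => (z n i)^2 - (y i)^2) δ hδ.le n (fun i hi => ?_)
      show |(z n i)^2 - (y i)^2| ≤ δ
      have h1 := hn i hi
      have h2 : |z n i + y i| ≤ 2*B + 1 := by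
        have : |z n i| ≤ |y i| + min 1 (δ / (2*B+1)) := by
          have := abs_sub_abs_le_abs_sub (z n i) (y i)
          linarith
        have := hB i
        have hm1 : min 1 (δ / (2*B+1)) ≤ 1 := min_le_left _ _
        calc |z n i + y i| ≤ |z n i| + |y i| := abs_add_le _ _
          _ ≤ 2*B + 1 := by linarith
      have key : (z n i)^2 - (y i)^2 = (z n i - y i) * (z n i + y i) := by ring
      rw [key, abs_mul]
      calc |z n i - y i| * |z n i + y i| ≤ (δ / (2*B+1)) * (2*B+1) := by
            apply mul_le_mul (le_trans h1 (min_le_right _ _)) h2 (abs_nonneg _) (by positivity)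
        _ = δ := by field_simp
    have := hdiff.add hm2
    have heq : ∀ n : ℕ, (n:ℝ)⁻¹ * ∑ i ∈ Finset.range n, ((z n i)^2 - (y i)^2)
        + (n:ℝ)⁻¹ * ∑ i ∈ Finset.range n, (y i)^2
        = (n:ℝ)⁻¹ * ∑ i ∈ Finset.range n, (z n i)^2 := by
      intro n; rw [Finset.sum_sub_distrib]; ring
    simp only [heq] at this
    simpa using this
  -- combine
  have hfinal : Tendsto (fun n : ℕ => ((n:ℝ)⁻¹ * ∑ i ∈ Finset.range n, (z n i)^2) - (zbar n)^2)
      atTop (𝓝 (m2 - m^2)) := hS2.sub (hzbar_m.pow 2)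
  apply hfinal.congr'
  filter_upwards [eventually_ge_atTop 1] with n hn
  have hn0 : (n:ℝ) ≠ 0 := by positivity
  have hexp : ∀ i : ℕ, (z n i - zbar n)^2 = (z n i)^2 - 2*(zbar n)*(z n i) + (zbar n)^2 := by
    intro i; ring
  have : ∑ i ∈ Finset.range n, (z n i - zbar n)^2
      = (∑ i ∈ Finset.range n, (z n i)^2) - 2*(zbar n)*(∑ i ∈ Finset.range n, z n i)
        + (n:ℝ)*(zbar n)^2 := by
    simp_rw [hexp]
    rw [Finset.sum_add_distrib, Finset.sum_sub_distrib, ← Finset.mul_sum,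
      Finset.sum_const, Finset.card_range, nsmul_eq_mul]
  have hsum : ∑ t ∈ Finset.range n, z n t = (n:ℝ) * zbar n := by
    rw [hzbar]; field_simp
  rw [this, hsum]
  field_simp
  ring

lemma aux_indep_eq_zero {Ω : Type*} [MeasurableSpace Ω] (P : Measure Ω) [IsProbabilityMeasure P]
    {A B : Ω → ℝ} (hA : Measurable A) (hB : Measurable B) (hAB : IndepFun A B P)
    (hatom : ∀ x : ℝ, P {ω | B ω = x} = 0) :
    P {ω | A ω = B ω} = 0 := by
  have hT : Measurable (fun ω => (A ω, B ω)) := hA.prodMk hB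
  have hdiag : MeasurableSet {p : ℝ × ℝ | p.1 = p.2} :=
    measurableSet_eq_fun measurable_fst measurable_snd
  have h1 : P {ω | A ω = B ω} = (P.map (fun ω => (A ω, B ω))) {p : ℝ × ℝ | p.1 = p.2} := by
    rw [Measure.map_apply hT hdiag]; rfl
  rw [h1, (indepFun_iff_map_prod_eq_prod_map_map hA.aemeasurable hB.aemeasurable).1 hAB,
    Measure.prod_apply hdiag]
  have h2 : ∀ x : ℝ, (P.map B) (Prod.mk x ⁻¹' {p : ℝ × ℝ | p.1 = p.2}) = 0 := by
    intro x
    have hpre : Prod.mk x ⁻¹' {p : ℝ × ℝ | p.1 = p.2} = {x} := by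
      ext y; simp [eq_comm]
    rw [hpre, Measure.map_apply hB (measurableSet_singleton x)]
    exact hatom x
  simp only [h2, lintegral_zero]

noncomputable def clamp (s : ℝ) : ℝ := max 0 (min 1 s)

lemma clamp_lip (s t : ℝ) : |clamp s - clamp t| ≤ |s - t| := by
  unfold clamp
  refine le_trans (abs_max_sub_max_le_max 0 (min 1 s) 0 (min 1 t)) ?_
  refine max_le (by simp [abs_nonneg]) ?_
  refine le_trans (abs_min_sub_min_le_max 1 s 1 t) ?_
  simp

lemma clamp_nonneg (s : ℝ) : 0 ≤ clamp s := le_max_left _ _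
lemma clamp_le_one (s : ℝ) : clamp s ≤ 1 := max_le (by norm_num) (min_le_left _ _)
lemma clamp_of_mem {s : ℝ} (h0 : 0 ≤ s) (h1 : s ≤ 1) : clamp s = s := by
  unfold clamp; rw [min_eq_right h1, max_eq_right h0]

lemma aux_pit {Ω : Type*} [MeasurableSpace Ω] (P : Measure Ω) [IsProbabilityMeasure P]
    (V : Ω → ℝ) (hV : Measurable V)
    (F : ℝ → ℝ) (hF : ∀ x, F x = (P {ω | V ω ≤ x}).toReal) (hFcont : Continuous F) :
    ∀ s : ℝ, P {ω | F (V ω) ≤ s} = ENNReal.ofReal (clamp s) := by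
  -- identify F with the cdf of the law of V
  set ν : Measure ℝ := P.map V with hν
  have : IsProbabilityMeasure ν := Measure.isProbabilityMeasure_map hV.aemeasurable
  have hFcdf : F = cdf ν := by
    funext x
    rw [hF x, cdf_eq_real, measureReal_def, hν, Measure.map_apply hV measurableSet_Iic]
    rfl
  have hmono : Monotone F := hFcdf ▸ monotone_cdf ν
  have hF0 : ∀ x, 0 ≤ F x := fun x => hFcdf ▸ cdf_nonneg ν x
  have hF1 : ∀ x, F x ≤ 1 := fun x => hFcdf ▸ cdf_le_one ν x
  have htop : Tendsto F atTop (𝓝 1) := hFcdf ▸ tendsto_cdf_atTop ν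
  have hbot : Tendsto F atBot (𝓝 0) := hFcdf ▸ tendsto_cdf_atBot ν
  have key : ∀ x, P {ω | V ω ≤ x} = ENNReal.ofReal (F x) := by
    intro x
    rw [hF x, ENNReal.ofReal_toReal (measure_ne_top P _)]
  have hIVT : ∀ c : ℝ, 0 < c → c < 1 → ∃ x, F x = c := by
    intro c hc0 hc1
    obtain ⟨a, ha⟩ := (hbot.eventually_lt_const hc0).exists
    obtain ⟨b, hb⟩ := (htop.eventually_const_lt hc1).exists
    have hab : a ≤ b := by
      by_contra hab
      push_neg at hab
      exact absurd (hmono hab.le) (by linarith)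
    have := intermediate_value_Icc hab hFcont.continuousOn
    obtain ⟨x, _, hx⟩ := this ⟨ha.le, hb.le⟩
    exact ⟨x, hx⟩
  intro s
  rcases lt_or_ge s 0 with hs | hs0
  · have hempty : {ω | F (V ω) ≤ s} = ∅ := by
      rw [Set.eq_empty_iff_forall_notMem]
      intro ω hω
      exact absurd (le_trans (hF0 (V ω)) hω) (by linarith)
    rw [hempty]
    have : clamp s = 0 := by unfold clamp; rw [min_eq_right (by linarith : s ≤ 1), max_eq_left hs.le]
    simp [this]
  rcases le_or_gt 1 s with hs1 | hs1
  · have huniv : {ω | F (V ω) ≤ s} = Set.univ := by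
      ext ω; simp only [Set.mem_setOf_eq, Set.mem_univ, iff_true]
      exact le_trans (hF1 (V ω)) hs1
    rw [huniv]
    have : clamp s = 1 := by
      unfold clamp; rw [min_eq_left hs1, max_eq_right (by norm_num : (0:ℝ) ≤ 1)]
    rw [this]
    simp [measure_univ]
  -- now 0 ≤ s < 1
  rw [clamp_of_mem hs0 hs1.le]
  have hmeasset : MeasurableSet {ω | F (V ω) ≤ s} := by
    exact measurableSet_le (hFcont.measurable.comp hV) measurable_const
  have hupper : P {ω | F (V ω) ≤ s} ≤ ENNReal.ofReal s := by
    have H : ∀ ε : ℝ, 0 < ε → ε < 1 - s → P {ω | F (V ω) ≤ s} ≤ ENNReal.ofReal (s + ε) := by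
      intro ε hε hε1
      obtain ⟨x, hx⟩ := hIVT (s + ε) (by linarith) (by linarith)
      have hsub : {ω | F (V ω) ≤ s} ⊆ {ω | V ω ≤ x} := by
        intro ω hω
        simp only [Set.mem_setOf_eq] at *
        by_contra hxo
        push_neg at hxo
        have := hmono hxo.le
        rw [hx] at this
        linarith
      calc P {ω | F (V ω) ≤ s} ≤ P {ω | V ω ≤ x} := measure_mono hsub
        _ = ENNReal.ofReal (s + ε) := by rw [key, hx]
    set r := (P {ω | F (V ω) ≤ s}).toReal with hr
    have hrle : ∀ ε : ℝ, 0 < ε → ε < 1 - s → r ≤ s + ε := by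
      intro ε hε hε1
      exact ENNReal.toReal_le_of_le_ofReal (by linarith) (H ε hε hε1)
    have hrs : r ≤ s := by
      by_contra hcon
      push_neg at hcon
      have hε : 0 < min ((r - s)/2) ((1 - s)/2) := lt_min (by linarith) (by linarith)
      have := hrle _ hε (lt_of_le_of_lt (min_le_right _ _) (by linarith))
      have h2 : min ((r - s)/2) ((1 - s)/2) ≤ (r - s)/2 := min_le_left _ _
      linarith
    calc P {ω | F (V ω) ≤ s} = ENNReal.ofReal r := (ENNReal.ofReal_toReal (measure_ne_top P _)).symm
      _ ≤ ENNReal.ofReal s := ENNReal.ofReal_le_ofReal hrs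
  have hlower : ENNReal.ofReal s ≤ P {ω | F (V ω) ≤ s} := by
    rcases eq_or_lt_of_le hs0 with hs0' | hs0'
    · simp [← hs0']
    have H : ∀ ε : ℝ, 0 < ε → ε < s → ENNReal.ofReal (s - ε) ≤ P {ω | F (V ω) ≤ s} := by
      intro ε hε hεs
      obtain ⟨x, hx⟩ := hIVT (s - ε) (by linarith) (by linarith)
      have hsub : {ω | V ω ≤ x} ⊆ {ω | F (V ω) ≤ s} := by
        intro ω hω
        simp only [Set.mem_setOf_eq] at *
        have := hmono hω
        rw [hx] at this
        linarith
      calc ENNReal.ofReal (s - ε) = P {ω | V ω ≤ x} := by rw [key, hx]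
        _ ≤ P {ω | F (V ω) ≤ s} := measure_mono hsub
    have hrle : ∀ ε : ℝ, 0 < ε → ε < s → s - ε ≤ (P {ω | F (V ω) ≤ s}).toReal := by
      intro ε hε hεs
      exact (ENNReal.ofReal_le_iff_le_toReal (measure_ne_top P _)).1 (H ε hε hεs)
    have hrs : s ≤ (P {ω | F (V ω) ≤ s}).toReal := by
      by_contra hcon
      push_neg at hcon
      set r := (P {ω | F (V ω) ≤ s}).toReal with hr
      have hε : 0 < min ((s - r)/2) (s/2) := lt_min (by linarith) (by linarith)
      have := hrle _ hε (lt_of_le_of_lt (min_le_right _ _) (by linarith))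
      have h2 : min ((s - r)/2) (s/2) ≤ (s - r)/2 := min_le_left _ _
      linarith
    calc ENNReal.ofReal s ≤ ENNReal.ofReal (P {ω | F (V ω) ≤ s}).toReal :=
          ENNReal.ofReal_le_ofReal hrs
      _ = P {ω | F (V ω) ≤ s} := ENNReal.ofReal_toReal (measure_ne_top P _)
  exact le_antisymm hupper hlower

lemma aux_pit_atom {Ω : Type*} [MeasurableSpace Ω] (P : Measure Ω) [IsProbabilityMeasure P]
    (V : Ω → ℝ) (hV : Measurable V)
    (F : ℝ → ℝ) (hF : ∀ x, F x = (P {ω | V ω ≤ x}).toReal) (hFcont : Continuous F) :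
    ∀ x : ℝ, P {ω | F (V ω) = x} = 0 := by
  intro x
  have hpit := aux_pit P V hV F hF hFcont
  have hmeas : ∀ y : ℝ, MeasurableSet {ω | F (V ω) ≤ y} :=
    fun y => measurableSet_le (hFcont.measurable.comp hV) measurable_const
  have hbound : ∀ ε : ℝ, 0 < ε → P {ω | F (V ω) = x} ≤ ENNReal.ofReal ε := by
    intro ε hε
    have hsub : {ω | F (V ω) = x} ⊆ {ω | F (V ω) ≤ x} \ {ω | F (V ω) ≤ x - ε} := by
      intro ω hω
      simp only [Set.mem_setOf_eq, Set.mem_diff] at *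
      exact ⟨hω.le, by rw [hω]; linarith⟩
    have hsub2 : {ω | F (V ω) ≤ x - ε} ⊆ {ω | F (V ω) ≤ x} := by
      intro ω hω; simp only [Set.mem_setOf_eq] at *; linarith
    calc P {ω | F (V ω) = x} ≤ P ({ω | F (V ω) ≤ x} \ {ω | F (V ω) ≤ x - ε}) :=
          measure_mono hsub
      _ = P {ω | F (V ω) ≤ x} - P {ω | F (V ω) ≤ x - ε} :=
          measure_diff hsub2 (hmeas _).nullMeasurableSet (measure_ne_top P _)
      _ = ENNReal.ofReal (clamp x) - ENNReal.ofReal (clamp (x - ε)) := by rw [hpit, hpit]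
      _ = ENNReal.ofReal (clamp x - clamp (x - ε)) := by
          rw [ENNReal.ofReal_sub _ (clamp_nonneg _)]
      _ ≤ ENNReal.ofReal ε := by
          apply ENNReal.ofReal_le_ofReal
          have := clamp_lip x (x - ε)
          rw [abs_le] at this
          have h2 := this.2
          have h3 : |x - (x - ε)| = ε := by rw [abs_of_nonneg (by linarith)]; ring
          linarith [h2, h3.le]
  by_contra hne
  have hpos : 0 < (P {ω | F (V ω) = x}).toReal :=
    ENNReal.toReal_pos hne (measure_ne_top P _)
  have := hbound ((P {ω | F (V ω) = x}).toReal / 2) (by linarith)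
  have h2 := ENNReal.toReal_le_of_le_ofReal (by linarith) this
  linarith

lemma aux_avg_le (n : ℕ) (w : ℕ → ℝ) (δ : ℝ) (hδ : 0 ≤ δ) (hw : ∀ t < n, |w t| ≤ δ) :
    |(n:ℝ)⁻¹ * ∑ t ∈ Finset.range n, w t| ≤ δ := by
  rcases Nat.eq_zero_or_pos n with hn | hn
  · simp [hn, hδ]
  have h1 : |∑ t ∈ Finset.range n, w t| ≤ ∑ t ∈ Finset.range n, |w t| :=
    Finset.abs_sum_le_sum_abs _ _
  have h2 : ∑ t ∈ Finset.range n, |w t| ≤ ∑ t ∈ Finset.range n, δ :=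
    Finset.sum_le_sum (fun t ht => hw t (Finset.mem_range.1 ht))
  rw [Finset.sum_const, Finset.card_range, nsmul_eq_mul] at h2
  have hn0 : (0:ℝ) < n := by exact_mod_cast hn
  rw [abs_mul, abs_inv, Nat.abs_cast]
  calc (n:ℝ)⁻¹ * |∑ t ∈ Finset.range n, w t| ≤ (n:ℝ)⁻¹ * (n * δ) := by
        apply mul_le_mul_of_nonneg_left (le_trans h1 h2) (by positivity)
    _ = δ := by field_simp

lemma aux_integral_ind {α : Type*} [MeasurableSpace α] (m : Measure α) (p : α → Prop)
    [DecidablePred p] (hS : MeasurableSet {x | p x}) :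
    ∫ x, (if p x then (1:ℝ) else 0) ∂m = (m {x | p x}).toReal := by
  have h : (fun x => if p x then (1:ℝ) else 0) = Set.indicator {x | p x} (fun _ => 1) := by
    funext x
    by_cases hx : p x <;> simp [Set.indicator_apply, Set.mem_setOf_eq, hx]
  rw [h, integral_indicator_const _ hS]
  simp
  rfl

set_option maxHeartbeats 4000000 in
/-- Consistency of the variance estimator in the serially independent case:
for i.i.d. observations with continuous margins, the rank-based estimator
`σ̂²_n` converges in probability to `Var(f(I_μ(U_1)))`, where `μ` is the law of
the vector of probability integral transforms. -/
theorem variance_estimator_consistent_iid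
    {Ω : Type*} [MeasurableSpace Ω] (P : Measure Ω) [IsProbabilityMeasure P]
    {d : ℕ} (hd : 1 ≤ d)
    (X : ℕ → Ω → (Fin d → ℝ)) (hmeas : ∀ i, Measurable (X i))
    (hindep : iIndepFun X P)
    (hident : ∀ i, P.map (X i) = P.map (X 0))
    (F : Fin d → ℝ → ℝ)
    (hF : ∀ j x, F j x = (P {ω | X 0 ω j ≤ x}).toReal)
    (hFcont : ∀ j, Continuous (F j))
    (Uhat : ℕ → ℕ → Ω → (Fin d → ℝ))
    (hUhat : ∀ n i ω j, Uhat n i ω j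
      = (n : ℝ)⁻¹ * ∑ t ∈ Finset.range n,
          (if X t ω j ≤ X i ω j then (1:ℝ) else 0))
    (Ihat : ℕ → Ω → (Fin d → ℝ) → {A : Finset (Fin d) // A.Nonempty} → ℝ)
    (hIhat : ∀ n ω u A, Ihat n ω u A
      = (∏ l ∈ A.1, (1 - u l))
        - (n : ℝ)⁻¹ * ∑ t ∈ Finset.range n, ∑ j ∈ A.1,
            (∏ l ∈ A.1.erase j, (1 - Uhat n t ω l))
              * (if u j ≤ Uhat n t ω j then (1:ℝ) else 0))
    (f : ({A : Finset (Fin d) // A.Nonempty} → ℝ) →ₗ[ℝ] ℝ)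
    (σ2 : ℕ → Ω → ℝ)
    (hσ2 : ∀ n ω, σ2 n ω
      = (n : ℝ)⁻¹ * ∑ i ∈ Finset.range n,
          (f (Ihat n ω (Uhat n i ω)
              - (n : ℝ)⁻¹ • ∑ t ∈ Finset.range n, Ihat n ω (Uhat n t ω))) ^ 2)
    (μ : Measure (Fin d → ℝ))
    (hμ : μ = P.map (fun ω => fun j => F j (X 0 ω j)))
    (Iμ : (Fin d → ℝ) → {A : Finset (Fin d) // A.Nonempty} → ℝ)
    (hIμ : ∀ u A, Iμ u A
      = (∏ l ∈ A.1, (1 - u l))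
        - ∫ w, ∑ j ∈ A.1, (∏ l ∈ A.1.erase j, (1 - w l))
            * (if u j ≤ w j then (1:ℝ) else 0) ∂μ) :
    ∀ ε : ℝ, 0 < ε →
      Tendsto (fun n => P {ω | ε <
          |σ2 n ω - variance (fun ω => f (Iμ (fun j => F j (X 0 ω j)))) P|})
        atTop (nhds 0) := by
  classical
  -- basic measurability
  have hVmeas : ∀ t j, Measurable (fun ω => X t ω j) :=
    fun t j => (measurable_pi_apply j).comp (hmeas t)
  set G : (Fin d → ℝ) → (Fin d → ℝ) := fun x j => F j (x j) with hGdef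
  have hGmeas : Measurable G :=
    measurable_pi_lambda _ (fun j => (hFcont j).measurable.comp (measurable_pi_apply j))
  set U : ℕ → Ω → (Fin d → ℝ) := fun t ω => G (X t ω) with hUdef
  have hUmeas : ∀ t, Measurable (U t) := fun t => hGmeas.comp (hmeas t)
  have hμmap : μ = P.map (U 0) := hμ
  have hμprob : IsProbabilityMeasure μ := by
    rw [hμmap]; exact Measure.isProbabilityMeasure_map (hUmeas 0).aemeasurable
  -- marginal cdf facts
  have hF01 : ∀ j x, 0 ≤ F j x ∧ F j x ≤ 1 := by
    intro j x
    rw [hF j x]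
    refine ⟨ENNReal.toReal_nonneg, ?_⟩
    have h1 : P {ω | X 0 ω j ≤ x} ≤ 1 := prob_le_one
    exact le_trans (ENNReal.toReal_mono ENNReal.one_ne_top h1) (by simp)
  have hFmono : ∀ j, Monotone (F j) := by
    intro j x y hxy
    rw [hF j x, hF j y]
    exact ENNReal.toReal_mono (measure_ne_top P _)
      (measure_mono (fun ω (h : X 0 ω j ≤ x) => le_trans h hxy))
  have hpit : ∀ j s, P {ω | F j (X 0 ω j) ≤ s} = ENNReal.ofReal (clamp s) :=
    fun j => aux_pit P _ (hVmeas 0 j) (F j) (hF j) (hFcont j)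
  have hatom0 : ∀ j x, P {ω | F j (X 0 ω j) = x} = 0 :=
    fun j => aux_pit_atom P _ (hVmeas 0 j) (F j) (hF j) (hFcont j)
  have hidd : ∀ t, IdentDistrib (X t) (X 0) P P :=
    fun t => ⟨(hmeas t).aemeasurable, (hmeas 0).aemeasurable, hident t⟩
  have hFXmeas : ∀ j, Measurable (fun v : Fin d → ℝ => F j (v j)) :=
    fun j => (hFcont j).measurable.comp (measurable_pi_apply j)
  have hatom : ∀ t j x, P {ω | F j (X t ω j) = x} = 0 := by
    intro t j x
    have hcomp := (hidd t).comp (hFXmeas j)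
    have h := hcomp.measure_mem_eq (measurableSet_singleton x)
    have h1 : ((fun v : Fin d → ℝ => F j (v j)) ∘ X t) ⁻¹' {x} = {ω | F j (X t ω j) = x} := rfl
    have h2 : ((fun v : Fin d → ℝ => F j (v j)) ∘ X 0) ⁻¹' {x} = {ω | F j (X 0 ω j) = x} := rfl
    rw [h1, h2] at h
    rw [h]; exact hatom0 j x
  -- marginal facts for μ
  have hμle : ∀ (j : Fin d) (s : ℝ), μ {v | v j ≤ s} = ENNReal.ofReal (clamp s) := by
    intro j s
    rw [hμmap, Measure.map_apply (hUmeas 0) (measurableSet_le (measurable_pi_apply j) measurable_const)]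
    exact hpit j s
  have hμatom : ∀ (j : Fin d) (s : ℝ), μ {v | v j = s} = 0 := by
    intro j s
    rw [hμmap, Measure.map_apply (hUmeas 0) (measurableSet_eq_fun (measurable_pi_apply j) measurable_const)]
    exact hatom0 j s
  have hboxset : MeasurableSet {v : Fin d → ℝ | ∀ l, 0 ≤ v l ∧ v l ≤ 1} := by
    have hset : {v : Fin d → ℝ | ∀ l, 0 ≤ v l ∧ v l ≤ 1}
        = ⋂ l, ({v : Fin d → ℝ | 0 ≤ v l} ∩ {v : Fin d → ℝ | v l ≤ 1}) := by
      ext v; simp [Set.mem_iInter]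
    rw [hset]
    exact MeasurableSet.iInter (fun l =>
      (measurableSet_le measurable_const (measurable_pi_apply l)).inter
        (measurableSet_le (measurable_pi_apply l) measurable_const))
  have hμbox : ∀ᵐ v ∂μ, ∀ l, 0 ≤ v l ∧ v l ≤ 1 := by
    rw [hμmap, MeasureTheory.ae_map_iff (hUmeas 0).aemeasurable hboxset]
    exact ae_of_all _ (fun ω l => hF01 l (X 0 ω l))
  -- integrability helper on μ
  have hμint : ∀ (h : (Fin d → ℝ) → ℝ) (C : ℝ), Measurable h →
      (∀ v, (∀ l, 0 ≤ v l ∧ v l ≤ 1) → |h v| ≤ C) → Integrable h μ := by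
    intro h C hh hbd
    refine (integrable_const C).mono' hh.aestronglyMeasurable ?_
    filter_upwards [hμbox] with v hv
    rw [Real.norm_eq_abs]
    exact hbd v hv
  -- kernel functions k
  have hgmeas : ∀ (A : {A : Finset (Fin d) // A.Nonempty}) (j : Fin d),
      Measurable (fun v : Fin d → ℝ => ∏ l ∈ A.1.erase j, (1 - v l)) :=
    fun A j => Finset.measurable_prod _ (fun l _ => measurable_const.sub (measurable_pi_apply l))
  have hindmeas : ∀ (j : Fin d) (s : ℝ),
      Measurable (fun v : Fin d → ℝ => if s ≤ v j then (1:ℝ) else 0) :=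
    fun j s => Measurable.ite (measurableSet_le measurable_const (measurable_pi_apply j))
      measurable_const measurable_const
  set k : {A : Finset (Fin d) // A.Nonempty} → Fin d → ℝ → ℝ :=
    fun A j s => ∫ v, (∏ l ∈ A.1.erase j, (1 - v l)) * (if s ≤ v j then (1:ℝ) else 0) ∂μ
    with hkdef
  have hgbox : ∀ (A : {A : Finset (Fin d) // A.Nonempty}) (j : Fin d) (v : Fin d → ℝ),
      (∀ l, 0 ≤ v l ∧ v l ≤ 1) →
      0 ≤ (∏ l ∈ A.1.erase j, (1 - v l)) ∧ (∏ l ∈ A.1.erase j, (1 - v l)) ≤ 1 := by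
    intro A j v hv
    exact ⟨Finset.prod_nonneg (fun l _ => by linarith [(hv l).2]),
      Finset.prod_le_one (fun l _ => by linarith [(hv l).2]) (fun l _ => by linarith [(hv l).1])⟩
  have hφmeas : ∀ (A : {A : Finset (Fin d) // A.Nonempty}) (j : Fin d) (s : ℝ),
      Measurable (fun v : Fin d → ℝ =>
        (∏ l ∈ A.1.erase j, (1 - v l)) * (if s ≤ v j then (1:ℝ) else 0)) :=
    fun A j s => (hgmeas A j).mul (hindmeas j s)
  have hφbox : ∀ (A : {A : Finset (Fin d) // A.Nonempty}) (j : Fin d) (s : ℝ) (v : Fin d → ℝ),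
      (∀ l, 0 ≤ v l ∧ v l ≤ 1) →
      0 ≤ (∏ l ∈ A.1.erase j, (1 - v l)) * (if s ≤ v j then (1:ℝ) else 0)
      ∧ (∏ l ∈ A.1.erase j, (1 - v l)) * (if s ≤ v j then (1:ℝ) else 0) ≤ 1 := by
    intro A j s v hv
    obtain ⟨hg0, hg1⟩ := hgbox A j v hv
    constructor
    · apply mul_nonneg hg0; split_ifs <;> norm_num
    · apply mul_le_one₀ hg1 ?_ ?_ <;> split_ifs <;> norm_num
  have hφint : ∀ (A : {A : Finset (Fin d) // A.Nonempty}) (j : Fin d) (s : ℝ),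
      Integrable (fun v : Fin d → ℝ =>
        (∏ l ∈ A.1.erase j, (1 - v l)) * (if s ≤ v j then (1:ℝ) else 0)) μ := by
    intro A j s
    refine hμint _ 1 (hφmeas A j s) (fun v hv => ?_)
    obtain ⟨h0, h1⟩ := hφbox A j s v hv
    rw [abs_le]; exact ⟨by linarith, h1⟩
  have hk01 : ∀ (A : {A : Finset (Fin d) // A.Nonempty}) (j : Fin d) (s : ℝ),
      0 ≤ k A j s ∧ k A j s ≤ 1 := by
    intro A j s
    constructor
    · apply integral_nonneg_of_ae
      filter_upwards [hμbox] with v hv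
      exact (hφbox A j s v hv).1
    · calc k A j s ≤ ∫ _v, (1:ℝ) ∂μ := by
            apply integral_mono_ae (hφint A j s) (integrable_const 1)
            filter_upwards [hμbox] with v hv
            exact (hφbox A j s v hv).2
        _ = 1 := by simp
  -- indicator integrals over μ
  have hμind_le : ∀ (j : Fin d) (c : ℝ),
      ∫ v, (if v j ≤ c then (1:ℝ) else 0) ∂μ = clamp c := by
    intro j c
    rw [aux_integral_ind μ (fun v => v j ≤ c)
      (measurableSet_le (measurable_pi_apply j) measurable_const), hμle j c,
      ENNReal.toReal_ofReal (clamp_nonneg c)]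
  have hμind_eq : ∀ (j : Fin d) (c : ℝ),
      ∫ v, (if v j = c then (1:ℝ) else 0) ∂μ = 0 := by
    intro j c
    rw [aux_integral_ind μ (fun v => v j = c)
      (measurableSet_eq_fun (measurable_pi_apply j) measurable_const), hμatom j c]
    simp
  -- Lipschitz property of k
  have hklip : ∀ (A : {A : Finset (Fin d) // A.Nonempty}) (j : Fin d) (s t : ℝ),
      |k A j s - k A j t| ≤ |s - t| := by
    have key : ∀ (A : {A : Finset (Fin d) // A.Nonempty}) (j : Fin d) (s t : ℝ), s ≤ t →
        k A j t ≤ k A j s ∧ k A j s - k A j t ≤ t - s := by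
      intro A j s t hst
      have hmono : k A j t ≤ k A j s := by
        apply integral_mono_ae (hφint A j t) (hφint A j s)
        filter_upwards [hμbox] with v hv
        obtain ⟨hg0, _⟩ := hgbox A j v hv
        apply mul_le_mul_of_nonneg_left _ hg0
        split_ifs with h1 h2 <;> try norm_num
        exact absurd (le_trans hst h1) h2
      refine ⟨hmono, ?_⟩
      set ρ : (Fin d → ℝ) → ℝ := fun v =>
        (if v j ≤ t then (1:ℝ) else 0) - (if v j ≤ s then (1:ℝ) else 0)
          + (if v j = s then (1:ℝ) else 0) with hρdef
      have hρmeas : Measurable ρ := by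
        apply Measurable.add
        · exact (Measurable.ite (measurableSet_le (measurable_pi_apply j) measurable_const)
            measurable_const measurable_const).sub
            (Measurable.ite (measurableSet_le (measurable_pi_apply j) measurable_const)
            measurable_const measurable_const)
        · exact Measurable.ite (measurableSet_eq_fun (measurable_pi_apply j) measurable_const)
            measurable_const measurable_const
      have hρint : Integrable ρ μ := by
        refine hμint ρ 3 hρmeas (fun v _ => ?_)
        simp only [hρdef]
        rw [abs_le]
        constructor <;> split_ifs <;> norm_num
      have hsub : k A j s - k A j t = ∫ v,
          ((∏ l ∈ A.1.erase j, (1 - v l)) * (if s ≤ v j then (1:ℝ) else 0)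
            - (∏ l ∈ A.1.erase j, (1 - v l)) * (if t ≤ v j then (1:ℝ) else 0)) ∂μ := by
        rw [integral_sub (hφint A j s) (hφint A j t)]
      have hle : k A j s - k A j t ≤ ∫ v, ρ v ∂μ := by
        rw [hsub]
        apply integral_mono_ae ((hφint A j s).sub (hφint A j t)) hρint
        filter_upwards [hμbox] with v hv
        obtain ⟨hg0, hg1⟩ := hgbox A j v hv
        simp only [hρdef, Pi.sub_apply]
        by_cases hc2 : t ≤ v j
        · have hc1 : s ≤ v j := le_trans hst hc2
          simp only [if_pos hc1, if_pos hc2, mul_one, sub_self]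
          by_cases h3 : v j ≤ s
          · have h5 : v j = s := le_antisymm h3 hc1
            simp only [if_pos h3, if_pos h5]
            split_ifs <;> norm_num
          · simp only [if_neg h3]
            split_ifs <;> norm_num
        · by_cases hc1 : s ≤ v j
          · -- s ≤ v j < t
            have hc3 : v j ≤ t := le_of_not_ge hc2
            simp only [if_pos hc1, if_neg hc2, mul_one, mul_zero, sub_zero, if_pos hc3]
            by_cases hc4 : v j ≤ s
            · have hc5 : v j = s := le_antisymm hc4 hc1
              simp only [if_pos hc4, if_pos hc5]; linarith
            · simp only [if_neg hc4]
              split_ifs <;> linarith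
          · simp only [if_neg hc1, if_neg hc2, mul_zero, sub_self]
            have hc3 : v j ≤ t := by
              by_contra h; exact hc2 (le_of_not_ge h)
            have hc4 : v j ≤ s := le_of_not_ge hc1
            simp only [if_pos hc3, if_pos hc4]
            split_ifs <;> norm_num
      have hρval : ∫ v, ρ v ∂μ = clamp t - clamp s := by
        rw [hρdef]
        rw [integral_add _ _]
        · rw [integral_sub _ _]
          · rw [hμind_le j t, hμind_le j s, hμind_eq j s, add_zero]
          · exact hμint _ 1 (Measurable.ite (measurableSet_le (measurable_pi_apply j)
              measurable_const) measurable_const measurable_const)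
              (fun v _ => by rw [abs_le]; split_ifs <;> norm_num)
          · exact hμint _ 1 (Measurable.ite (measurableSet_le (measurable_pi_apply j)
              measurable_const) measurable_const measurable_const)
              (fun v _ => by rw [abs_le]; split_ifs <;> norm_num)
        · exact Integrable.sub (hμint _ 1 (Measurable.ite (measurableSet_le
            (measurable_pi_apply j) measurable_const) measurable_const measurable_const)
            (fun v _ => by rw [abs_le]; split_ifs <;> norm_num))
            (hμint _ 1 (Measurable.ite (measurableSet_le (measurable_pi_apply j)
            measurable_const) measurable_const measurable_const)
            (fun v _ => by rw [abs_le]; split_ifs <;> norm_num))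
        · exact hμint _ 1 (Measurable.ite (measurableSet_eq_fun (measurable_pi_apply j)
            measurable_const) measurable_const measurable_const)
            (fun v _ => by rw [abs_le]; split_ifs <;> norm_num)
      have hcl : clamp t - clamp s ≤ t - s := by
        have := clamp_lip t s
        rw [abs_le] at this
        have h2 := this.2
        have h3 : |t - s| = t - s := abs_of_nonneg (by linarith)
        linarith [h2, h3.le]
      rw [hρval] at hle
      linarith
    intro A j s t
    rcases le_total s t with hst | hst
    · obtain ⟨h1, h2⟩ := key A j s t hst
      rw [abs_le]
      constructor
      · have : -(|s - t|) ≤ 0 := neg_nonpos_of_nonneg (abs_nonneg _)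
        linarith
      · have h3 : |s - t| = t - s := by rw [abs_sub_comm]; exact abs_of_nonneg (by linarith)
        linarith
    · obtain ⟨h1, h2⟩ := key A j t s hst
      rw [abs_le]
      constructor
      · have h3 : |s - t| = s - t := abs_of_nonneg (by linarith)
        linarith
      · have h3 : |s - t| = s - t := abs_of_nonneg (by linarith)
        linarith
  -- Iμ identity
  have hIcalc : ∀ (u : Fin d → ℝ) (A : {A : Finset (Fin d) // A.Nonempty}),
      Iμ u A = (∏ l ∈ A.1, (1 - u l)) - ∑ j ∈ A.1, k A j (u j) := by
    intro u A
    rw [hIμ u A]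
    congr 1
    rw [integral_finset_sum _ (fun j _ => hφint A j (u j))]
  have hkcont : ∀ A j, Continuous (k A j) := by
    intro A j
    have hl : LipschitzWith 1 (k A j) := LipschitzWith.of_dist_le_mul (fun s t => by
      rw [Real.dist_eq, Real.dist_eq, NNReal.coe_one, one_mul]; exact hklip A j s t)
    exact hl.continuous
  have hIμcont : Continuous (fun u => Iμ u) := by
    apply continuous_pi
    intro A
    have heq : (fun u : Fin d → ℝ => Iμ u A)
        = fun u => (∏ l ∈ A.1, (1 - u l)) - ∑ j ∈ A.1, k A j (u j) :=
      funext (fun u => hIcalc u A)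
    rw [heq]
    apply Continuous.sub
    · exact continuous_finset_prod _ (fun l _ => continuous_const.sub (continuous_apply l))
    · exact continuous_finset_sum _ (fun j _ => (hkcont A j).comp (continuous_apply j))
  set y : (Fin d → ℝ) → ℝ := fun v => f (Iμ v) with hydef
  have hfcont : Continuous f := f.continuous_of_finiteDimensional
  have hycont : Continuous y := hfcont.comp hIμcont
  have hymeas : Measurable y := hycont.measurable
  have hIμbd : ∀ (v : Fin d → ℝ), (∀ l, 0 ≤ v l ∧ v l ≤ 1) → ∀ A, |Iμ v A| ≤ 1 + d := by
    intro v hv A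
    rw [hIcalc v A]
    have h1 : |∏ l ∈ A.1, (1 - v l)| ≤ 1 := by
      rw [abs_le]
      constructor
      · have h0 : (0:ℝ) ≤ ∏ l ∈ A.1, (1 - v l) :=
          Finset.prod_nonneg (fun l _ => by linarith [(hv l).2])
        linarith
      · exact Finset.prod_le_one (fun l _ => by linarith [(hv l).2])
          (fun l _ => by linarith [(hv l).1])
    have h2 : |∑ j ∈ A.1, k A j (v j)| ≤ (d:ℝ) := by
      refine le_trans (Finset.abs_sum_le_sum_abs _ _) ?_
      calc ∑ j ∈ A.1, |k A j (v j)| ≤ ∑ _j ∈ A.1, (1:ℝ) := by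
            apply Finset.sum_le_sum
            intro j _
            obtain ⟨ha, hb⟩ := hk01 A j (v j)
            rw [abs_le]; exact ⟨by linarith, hb⟩
        _ = (A.1.card : ℝ) := by simp
        _ ≤ (d:ℝ) := by
            have := Finset.card_le_univ A.1
            have h3 : A.1.card ≤ d := by simpa using this
            exact_mod_cast h3
    calc |(∏ l ∈ A.1, (1 - v l)) - ∑ j ∈ A.1, k A j (v j)|
        ≤ |∏ l ∈ A.1, (1 - v l)| + |∑ j ∈ A.1, k A j (v j)| := abs_sub _ _
      _ ≤ 1 + d := add_le_add h1 h2
  -- operator norm bound for f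
  set f' := LinearMap.toContinuousLinearMap f with hf'def
  set Cf := ‖f'‖ with hCfdef
  have hCf0 : 0 ≤ Cf := norm_nonneg _
  have hfbd : ∀ (w : {A : Finset (Fin d) // A.Nonempty} → ℝ) (c : ℝ), 0 ≤ c →
      (∀ A, |w A| ≤ c) → |f w| ≤ Cf * c := by
    intro w c hc hw
    have hfw : f w = f' w := rfl
    rw [hfw]
    calc |f' w| = ‖f' w‖ := (Real.norm_eq_abs _).symm
      _ ≤ Cf * ‖w‖ := f'.le_opNorm w
      _ ≤ Cf * c := by
          apply mul_le_mul_of_nonneg_left _ hCf0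
          refine (pi_norm_le_iff_of_nonneg hc).2 (fun A => ?_)
          rw [Real.norm_eq_abs]; exact hw A
  set B := Cf * (1 + d) with hBdef
  have hybd : ∀ v, (∀ l, 0 ≤ v l ∧ v l ≤ 1) → |y v| ≤ B :=
    fun v hv => hfbd _ _ (by positivity) (hIμbd v hv)
  have hB0 : 0 ≤ B := by positivity
  -- strong law of large numbers engine
  have hslln : ∀ (φ : (Fin d → ℝ) → ℝ) (C : ℝ), Measurable φ →
      (∀ v, (∀ l, 0 ≤ v l ∧ v l ≤ 1) → |φ v| ≤ C) →
      ∀ᵐ ω ∂P, Tendsto (fun n : ℕ => (n:ℝ)⁻¹ * ∑ t ∈ Finset.range n, φ (U t ω))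
        atTop (𝓝 (∫ v, φ v ∂μ)) := by
    intro φ C hφ hbd
    have hφG : Measurable (φ ∘ G) := hφ.comp hGmeas
    have hbd' : ∀ x : Fin d → ℝ, |φ (G x)| ≤ C := fun x => hbd (G x) (fun l => hF01 l (x l))
    have hint : Integrable (fun ω => φ (U 0 ω)) P := by
      refine (integrable_const C).mono' (hφG.comp (hmeas 0)).aestronglyMeasurable ?_
      exact ae_of_all _ (fun ω => by rw [Real.norm_eq_abs]; exact hbd' (X 0 ω))
    have hind : Pairwise (Function.onFun (IndepFun · · P) (fun t ω => φ (U t ω))) := by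
      intro t i hti
      exact (hindep.indepFun hti).comp hφG hφG
    have hid : ∀ t, IdentDistrib (fun ω => φ (U t ω)) (fun ω => φ (U 0 ω)) P P :=
      fun t => (hidd t).comp hφG
    have hsl := strong_law_ae_real (fun t ω => φ (U t ω)) hint hind hid
    have hival : (∫ ω, φ (U 0 ω) ∂P) = ∫ v, φ v ∂μ := by
      rw [hμmap, integral_map (hUmeas 0).aemeasurable hφ.aestronglyMeasurable]
    filter_upwards [hsl] with ω hω
    have heq : ∀ n : ℕ, (∑ t ∈ Finset.range n, φ (U t ω)) / (n:ℝ)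
        = (n:ℝ)⁻¹ * ∑ t ∈ Finset.range n, φ (U t ω) := fun n => div_eq_inv_mul _ _
    have h2 := hω.congr heq
    rwa [show (∫ ω, φ (U 0 ω) ∂P) = ∫ v, φ v ∂μ from hival] at h2
  -- a.e. events
  have E1 : ∀ᵐ ω ∂P, ∀ (j : Fin d) (q : ℚ), Tendsto (fun n : ℕ => (n:ℝ)⁻¹ *
      ∑ t ∈ Finset.range n, (if U t ω j ≤ (q:ℝ) then (1:ℝ) else 0)) atTop
      (𝓝 (clamp (q:ℝ))) := by
    rw [ae_all_iff]
    intro j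
    rw [ae_all_iff]
    intro q
    have hφm : Measurable (fun v : Fin d → ℝ => if v j ≤ (q:ℝ) then (1:ℝ) else 0) :=
      Measurable.ite (measurableSet_le (measurable_pi_apply j) measurable_const)
        measurable_const measurable_const
    have h := hslln _ 1 hφm (fun v _ => by rw [abs_le]; constructor <;> split_ifs <;> norm_num)
    rwa [hμind_le j (q:ℝ)] at h
  have E2 : ∀ᵐ ω ∂P, ∀ (A : {A : Finset (Fin d) // A.Nonempty}) (j : Fin d) (q : ℚ),
      Tendsto (fun n : ℕ => (n:ℝ)⁻¹ * ∑ t ∈ Finset.range n,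
        (∏ l ∈ A.1.erase j, (1 - U t ω l)) * (if (q:ℝ) ≤ U t ω j then (1:ℝ) else 0))
        atTop (𝓝 (k A j (q:ℝ))) := by
    rw [ae_all_iff]; intro A
    rw [ae_all_iff]; intro j
    rw [ae_all_iff]; intro q
    exact hslln _ 1 (hφmeas A j (q:ℝ)) (fun v hv => by
      obtain ⟨h0, h1⟩ := hφbox A j (q:ℝ) v hv
      rw [abs_le]; exact ⟨by linarith, h1⟩)
  have E3 : ∀ᵐ ω ∂P, Tendsto (fun n : ℕ => (n:ℝ)⁻¹ * ∑ t ∈ Finset.range n, y (U t ω))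
      atTop (𝓝 (∫ v, y v ∂μ)) := hslln y B hymeas hybd
  have E4 : ∀ᵐ ω ∂P, Tendsto (fun n : ℕ => (n:ℝ)⁻¹ * ∑ t ∈ Finset.range n, (y (U t ω))^2)
      atTop (𝓝 (∫ v, (y v)^2 ∂μ)) := by
    refine hslln _ (B^2) ((hycont.pow 2).measurable) (fun v hv => ?_)
    have h := hybd v hv
    rw [show |(y v)^2| = |y v|^2 by rw [sq_abs]; rw [abs_of_nonneg (sq_nonneg _)]]
    exact pow_le_pow_left₀ (abs_nonneg _) h 2
  have E5 : ∀ᵐ ω ∂P, ∀ (t i : ℕ) (j : Fin d), t ≠ i →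
      F j (X t ω j) ≠ F j (X i ω j) := by
    rw [ae_all_iff]; intro t
    rw [ae_all_iff]; intro i
    rw [ae_all_iff]; intro j
    by_cases hti : t = i
    · exact ae_of_all _ (fun ω h => absurd hti h)
    · have h0 : P {ω | F j (X t ω j) = F j (X i ω j)} = 0 :=
        aux_indep_eq_zero P ((hFXmeas j).comp (hmeas t)) ((hFXmeas j).comp (hmeas i))
          ((hindep.indepFun hti).comp (hFXmeas j) (hFXmeas j))
          (fun x => hatom i j x)
      rw [ae_iff]
      refine measure_mono_null ?_ h0
      intro ω hω
      simp only [Set.mem_setOf_eq] at *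
      push_neg at hω
      exact hω.2
  set my : ℝ := ∫ v, y v ∂μ with hmydef
  set my2 : ℝ := ∫ v, (y v)^2 ∂μ with hmy2def
  -- almost-everywhere convergence of the estimator
  have hae : ∀ᵐ ω ∂P, Tendsto (fun n => σ2 n ω) atTop (𝓝 (my2 - my^2)) := by
    filter_upwards [E1, E2, E3, E4, E5] with ω hE1 hE2 hE3 hE4 hE5
    set u : ℕ → Fin d → ℝ := fun t => U t ω with hudef
    have hubox : ∀ t l, 0 ≤ u t l ∧ u t l ≤ 1 := fun t l => hF01 l (X t ω l)
    set L : ℕ → Fin d → ℝ → ℝ :=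
      fun n j s => (n:ℝ)⁻¹ * ∑ t ∈ Finset.range n, (if u t j ≤ s then (1:ℝ) else 0) with hLdef
    have hUhatL : ∀ (n i : ℕ) (j : Fin d), Uhat n i ω j = L n j (u i j) := by
      intro n i j
      rw [hUhat n i ω j]
      simp only [hLdef]
      congr 1
      apply Finset.sum_congr rfl
      intro t _
      by_cases hti : t = i
      · subst hti; simp
      · have hne := hE5 t i j hti
        have hiff : X t ω j ≤ X i ω j ↔ u t j ≤ u i j := by
          constructor
          · exact fun h => hFmono j h
          · intro h
            by_contra hc
            push_neg at hc
            have h2 := hFmono j hc.le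
            exact hne (le_antisymm h h2)
        exact if_congr hiff rfl rfl
    have hLmono : ∀ n j, Monotone (L n j) := by
      intro n j s1 s2 hs
      simp only [hLdef]
      apply mul_le_mul_of_nonneg_left _ (by positivity)
      apply Finset.sum_le_sum
      intro t _
      split_ifs with ha hb
      · exact le_refl 1
      · exact absurd (le_trans ha hs) hb
      · norm_num
      · exact le_refl 0
    have hL01 : ∀ n j s, 0 ≤ L n j s ∧ L n j s ≤ 1 := by
      intro n j s
      simp only [hLdef]
      constructor
      · apply mul_nonneg (by positivity)
        apply Finset.sum_nonneg
        intro t _; split_ifs <;> norm_num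
      · rcases Nat.eq_zero_or_pos n with h | h
        · simp [h]
        have hn0 : (0:ℝ) < n := by exact_mod_cast h
        calc (n:ℝ)⁻¹ * ∑ t ∈ Finset.range n, (if u t j ≤ s then (1:ℝ) else 0)
            ≤ (n:ℝ)⁻¹ * ∑ _t ∈ Finset.range n, (1:ℝ) := by
              apply mul_le_mul_of_nonneg_left _ (by positivity)
              apply Finset.sum_le_sum
              intro t _; split_ifs <;> norm_num
          _ = 1 := by
              rw [Finset.sum_const, Finset.card_range, nsmul_eq_mul, mul_one]
              field_simp
    have GC1 : ∀ (j : Fin d) (δ : ℝ), 0 < δ → ∀ᶠ n in atTop, ∀ s ∈ Set.Icc (0:ℝ) 1,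
        |L n j s - s| ≤ δ := by
      intro j δ hδ
      have h := aux_polya_mono (fun n s => L n j s) clamp (fun n => hLmono n j) clamp_lip
        (fun q => hE1 j q) hδ
      filter_upwards [h] with n hn s hs
      have h2 := hn s hs
      rwa [clamp_of_mem hs.1 hs.2] at h2
    have GC2 : ∀ (A : {A : Finset (Fin d) // A.Nonempty}) (j : Fin d) (δ : ℝ), 0 < δ →
        ∀ᶠ n : ℕ in atTop, ∀ s ∈ Set.Icc (0:ℝ) 1,
        |(n:ℝ)⁻¹ * ∑ t ∈ Finset.range n,
          (∏ l ∈ A.1.erase j, (1 - u t l)) * (if s ≤ u t j then (1:ℝ) else 0)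
          - k A j s| ≤ δ := by
      intro A j δ hδ
      refine aux_polya_anti (fun n s => (n:ℝ)⁻¹ * ∑ t ∈ Finset.range n,
        (∏ l ∈ A.1.erase j, (1 - u t l)) * (if s ≤ u t j then (1:ℝ) else 0))
        (k A j) ?_ (hklip A j) (fun q => hE2 A j q) hδ
      intro n s1 s2 hs
      apply mul_le_mul_of_nonneg_left _ (by positivity)
      apply Finset.sum_le_sum
      intro t _
      apply mul_le_mul_of_nonneg_left _ (hgbox A j (u t) (hubox t)).1
      split_ifs with ha hb
      · exact le_refl 1
      · exact absurd (le_trans hs ha) hb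
      · norm_num
      · exact le_refl 0
    -- the key uniform approximation
    have hIclose : ∀ δ : ℝ, 0 < δ → ∀ᶠ n in atTop, ∀ i < n,
        ∀ A : {A : Finset (Fin d) // A.Nonempty},
        |Ihat n ω (Uhat n i ω) A - Iμ (u i) A| ≤ δ := by
      intro δ hδ
      set ε : ℝ := δ / (d*d + 7*d + 1) with hεdef
      have hε : 0 < ε := by
        apply div_pos hδ
        have : (0:ℝ) ≤ (d:ℝ) := Nat.cast_nonneg d
        nlinarith
      have hGC1all : ∀ᶠ n in atTop, ∀ j : Fin d, ∀ s ∈ Set.Icc (0:ℝ) 1,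
          |L n j s - s| ≤ ε := by
        rw [eventually_all]
        exact fun j => GC1 j ε hε
      have hGC2all : ∀ᶠ n : ℕ in atTop, ∀ (A : {A : Finset (Fin d) // A.Nonempty}) (j : Fin d),
          ∀ s ∈ Set.Icc (0:ℝ) 1,
          |(n:ℝ)⁻¹ * ∑ t ∈ Finset.range n,
            (∏ l ∈ A.1.erase j, (1 - u t l)) * (if s ≤ u t j then (1:ℝ) else 0)
            - k A j s| ≤ ε := by
        rw [eventually_all]
        intro A
        rw [eventually_all]
        exact fun j => GC2 A j ε hε
      filter_upwards [hGC1all, hGC2all] with n h1 h2 i hi A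
      have hdR : (0:ℝ) ≤ d := Nat.cast_nonneg d
      have hcard : (A.1.card : ℝ) ≤ d := by
        have hc := Finset.card_le_univ A.1
        have hc2 : A.1.card ≤ d := by simpa using hc
        exact_mod_cast hc2
      have hcarde : ∀ j : Fin d, ((A.1.erase j).card : ℝ) ≤ d := by
        intro j
        have hc := Finset.card_le_univ (A.1.erase j)
        have hc2 : (A.1.erase j).card ≤ d := by simpa using hc
        exact_mod_cast hc2
      -- per-j estimate
      have hperj : ∀ j ∈ A.1,
          |(n:ℝ)⁻¹ * ∑ t ∈ Finset.range n,
            (∏ l ∈ A.1.erase j, (1 - L n l (u t l)))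
              * (if L n j (u i j) ≤ L n j (u t j) then (1:ℝ) else 0)
            - k A j (u i j)| ≤ 5*ε + d*ε + ε := by
        intro j _
        have hajbox : u i j ∈ Set.Icc (0:ℝ) 1 := ⟨(hubox i j).1, (hubox i j).2⟩
        set Q : ℕ → ℝ := fun t => (∏ l ∈ A.1.erase j, (1 - L n l (u t l)))
          * (if L n j (u i j) ≤ L n j (u t j) then (1:ℝ) else 0) with hQdef
        set Q2 : ℕ → ℝ := fun t => (∏ l ∈ A.1.erase j, (1 - L n l (u t l)))
          * (if u i j ≤ u t j then (1:ℝ) else 0) with hQ2def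
        set Q3 : ℕ → ℝ := fun t => (∏ l ∈ A.1.erase j, (1 - u t l))
          * (if u i j ≤ u t j then (1:ℝ) else 0) with hQ3def
        have hPLbox : ∀ t, 0 ≤ (∏ l ∈ A.1.erase j, (1 - L n l (u t l)))
            ∧ (∏ l ∈ A.1.erase j, (1 - L n l (u t l))) ≤ 1 := by
          intro t
          constructor
          · exact Finset.prod_nonneg (fun l _ => by linarith [(hL01 n l (u t l)).2])
          · exact Finset.prod_le_one (fun l _ => by linarith [(hL01 n l (u t l)).2])
              (fun l _ => by linarith [(hL01 n l (u t l)).1])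
        -- pointwise indicator-swap bound
        have hQ1bd : ∀ t, |Q t - Q2 t| ≤
            (if u t j ≤ u i j then (1:ℝ) else 0)
              - (if u t j ≤ u i j - 3*ε then (1:ℝ) else 0) := by
          intro t
          have hrhs0 : (0:ℝ) ≤ (if u t j ≤ u i j then (1:ℝ) else 0)
              - (if u t j ≤ u i j - 3*ε then (1:ℝ) else 0) := by
            split_ifs with ha hb <;> try norm_num
            exact absurd (by linarith : u t j ≤ u i j) ha
          simp only [hQdef, hQ2def]
          rw [← mul_sub, abs_mul]
          by_cases hA : u i j ≤ u t j
          · have hLA : L n j (u i j) ≤ L n j (u t j) := hLmono n j hA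
            rw [if_pos hLA, if_pos hA, sub_self, abs_zero, mul_zero]
            exact hrhs0
          · by_cases hB : L n j (u i j) ≤ L n j (u t j)
            · -- disagreement case
              have hta : u t j ≤ u i j := (le_of_not_ge hA)
              have htb : u i j - 3*ε < u t j := by
                have h1a := h1 j (u i j) hajbox
                have h1b := h1 j (u t j) ⟨(hubox t j).1, (hubox t j).2⟩
                rw [abs_le] at h1a h1b
                linarith [h1a.1, h1b.2]
              rw [if_pos hB, if_neg hA, if_pos hta, if_neg (not_le.2 htb)]
              have habs : |(1:ℝ) - 0| = 1 := by norm_num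
              rw [habs, mul_one]
              have h3 := (hPLbox t)
              rw [abs_of_nonneg h3.1]
              linarith [h3.2]
            · rw [if_neg hB, if_neg hA, sub_self, abs_zero, mul_zero]
              exact hrhs0
        have habs1 : |(n:ℝ)⁻¹ * ∑ t ∈ Finset.range n, (Q t - Q2 t)| ≤ 5*ε := by
          have hstep : |∑ t ∈ Finset.range n, (Q t - Q2 t)|
              ≤ ∑ t ∈ Finset.range n, ((if u t j ≤ u i j then (1:ℝ) else 0)
                - (if u t j ≤ u i j - 3*ε then (1:ℝ) else 0)) :=
            le_trans (Finset.abs_sum_le_sum_abs _ _)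
              (Finset.sum_le_sum (fun t _ => hQ1bd t))
          have hsum1 : (n:ℝ)⁻¹ * ∑ t ∈ Finset.range n,
              ((if u t j ≤ u i j then (1:ℝ) else 0)
                - (if u t j ≤ u i j - 3*ε then (1:ℝ) else 0))
              = L n j (u i j) - L n j (u i j - 3*ε) := by
            rw [Finset.sum_sub_distrib, mul_sub]
          have hLdiff : L n j (u i j) - L n j (u i j - 3*ε) ≤ 5*ε := by
            rcases le_or_gt 0 (u i j - 3*ε) with hc | hc
            · have h1a := h1 j (u i j) hajbox
              have h1b := h1 j (u i j - 3*ε) ⟨hc, by linarith [hajbox.2]⟩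
              rw [abs_le] at h1a h1b
              linarith [h1a.2, h1b.1]
            · have h1a := h1 j (u i j) hajbox
              rw [abs_le] at h1a
              have h0 := (hL01 n j (u i j - 3*ε)).1
              have haj3 : u i j < 3*ε := by linarith
              linarith [h1a.2]
          rw [abs_mul, abs_inv, Nat.abs_cast]
          calc (n:ℝ)⁻¹ * |∑ t ∈ Finset.range n, (Q t - Q2 t)|
              ≤ (n:ℝ)⁻¹ * ∑ t ∈ Finset.range n,
                ((if u t j ≤ u i j then (1:ℝ) else 0)
                  - (if u t j ≤ u i j - 3*ε then (1:ℝ) else 0)) :=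
                mul_le_mul_of_nonneg_left hstep (by positivity)
            _ = L n j (u i j) - L n j (u i j - 3*ε) := hsum1
            _ ≤ 5*ε := hLdiff
        -- product-swap bound
        have hQ2bd : ∀ t, |Q2 t - Q3 t| ≤ d * ε := by
          intro t
          simp only [hQ2def, hQ3def]
          rw [← sub_mul, abs_mul]
          have hprod : |(∏ l ∈ A.1.erase j, (1 - L n l (u t l)))
              - ∏ l ∈ A.1.erase j, (1 - u t l)|
              ≤ ∑ l ∈ A.1.erase j, |(1 - L n l (u t l)) - (1 - u t l)| := by
            apply aux_abs_prod_sub_prod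
            · intro l _
              exact ⟨by linarith [(hL01 n l (u t l)).2], by linarith [(hL01 n l (u t l)).1]⟩
            · intro l _
              exact ⟨by linarith [(hubox t l).2], by linarith [(hubox t l).1]⟩
          have hsum : ∑ l ∈ A.1.erase j, |(1 - L n l (u t l)) - (1 - u t l)|
              ≤ ∑ _l ∈ A.1.erase j, ε := by
            apply Finset.sum_le_sum
            intro l _
            have heq : (1 - L n l (u t l)) - (1 - u t l) = -(L n l (u t l) - u t l) := by ring
            rw [heq, abs_neg]
            exact h1 l (u t l) ⟨(hubox t l).1, (hubox t l).2⟩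
          have hsum2 : ∑ _l ∈ A.1.erase j, ε = (A.1.erase j).card * ε := by
            rw [Finset.sum_const, nsmul_eq_mul]
          have hindle : |(if u i j ≤ u t j then (1:ℝ) else 0)| ≤ 1 := by
            split_ifs <;> norm_num
          calc |(∏ l ∈ A.1.erase j, (1 - L n l (u t l))) - ∏ l ∈ A.1.erase j, (1 - u t l)|
                * |(if u i j ≤ u t j then (1:ℝ) else 0)|
              ≤ ((A.1.erase j).card * ε) * 1 := by
                apply mul_le_mul _ hindle (abs_nonneg _) (by positivity)
                exact le_trans hprod (le_trans hsum hsum2.le)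
            _ ≤ d * ε := by
                rw [mul_one]
                apply mul_le_mul_of_nonneg_right (hcarde j) hε.le
        have habs2 : |(n:ℝ)⁻¹ * ∑ t ∈ Finset.range n, (Q2 t - Q3 t)| ≤ d * ε :=
          aux_avg_le n (fun t => Q2 t - Q3 t) (d*ε) (by positivity) (fun t _ => hQ2bd t)
        -- empirical-process bound
        have habs3 : |(n:ℝ)⁻¹ * ∑ t ∈ Finset.range n, Q3 t - k A j (u i j)| ≤ ε :=
          h2 A j (u i j) hajbox
        -- combine
        have hsplit : (n:ℝ)⁻¹ * ∑ t ∈ Finset.range n, Q t - k A j (u i j)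
            = ((n:ℝ)⁻¹ * ∑ t ∈ Finset.range n, (Q t - Q2 t))
              + ((n:ℝ)⁻¹ * ∑ t ∈ Finset.range n, (Q2 t - Q3 t))
              + ((n:ℝ)⁻¹ * ∑ t ∈ Finset.range n, Q3 t - k A j (u i j)) := by
          rw [Finset.sum_sub_distrib, Finset.sum_sub_distrib]
          ring
        calc |(n:ℝ)⁻¹ * ∑ t ∈ Finset.range n, Q t - k A j (u i j)|
            ≤ |(n:ℝ)⁻¹ * ∑ t ∈ Finset.range n, (Q t - Q2 t)|
              + |(n:ℝ)⁻¹ * ∑ t ∈ Finset.range n, (Q2 t - Q3 t)|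
              + |(n:ℝ)⁻¹ * ∑ t ∈ Finset.range n, Q3 t - k A j (u i j)| := by
              rw [hsplit]
              have t2 := abs_add_le ((n:ℝ)⁻¹ * (∑ t ∈ Finset.range n, (Q t - Q2 t))
                + (n:ℝ)⁻¹ * (∑ t ∈ Finset.range n, (Q2 t - Q3 t)))
                ((n:ℝ)⁻¹ * (∑ t ∈ Finset.range n, Q3 t) - k A j (u i j))
              have t1 := abs_add_le ((n:ℝ)⁻¹ * (∑ t ∈ Finset.range n, (Q t - Q2 t)))
                ((n:ℝ)⁻¹ * (∑ t ∈ Finset.range n, (Q2 t - Q3 t)))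
              have t3 : (n:ℝ)⁻¹ * (∑ t ∈ Finset.range n, (Q t - Q2 t))
                + (n:ℝ)⁻¹ * (∑ t ∈ Finset.range n, (Q2 t - Q3 t))
                + ((n:ℝ)⁻¹ * (∑ t ∈ Finset.range n, Q3 t) - k A j (u i j))
                = ((n:ℝ)⁻¹ * (∑ t ∈ Finset.range n, (Q t - Q2 t))
                + (n:ℝ)⁻¹ * (∑ t ∈ Finset.range n, (Q2 t - Q3 t)))
                + ((n:ℝ)⁻¹ * (∑ t ∈ Finset.range n, Q3 t) - k A j (u i j)) := by ring
              rw [t3]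
              exact le_trans t2 (by linarith)
          _ ≤ 5*ε + d*ε + ε := by
              have := habs1; have := habs2; have := habs3; linarith
      -- now assemble the per-A bound
      rw [hIhat n ω (Uhat n i ω) A, hIcalc (u i) A]
      simp only [hUhatL]
      have hprodbd : |(∏ l ∈ A.1, (1 - L n l (u i l))) - ∏ l ∈ A.1, (1 - u i l)|
          ≤ d * ε := by
        have hstep : |(∏ l ∈ A.1, (1 - L n l (u i l))) - ∏ l ∈ A.1, (1 - u i l)|
            ≤ ∑ l ∈ A.1, |(1 - L n l (u i l)) - (1 - u i l)| := by
          apply aux_abs_prod_sub_prod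
          · intro l _
            exact ⟨by linarith [(hL01 n l (u i l)).2], by linarith [(hL01 n l (u i l)).1]⟩
          · intro l _
            exact ⟨by linarith [(hubox i l).2], by linarith [(hubox i l).1]⟩
        have hsum : ∑ l ∈ A.1, |(1 - L n l (u i l)) - (1 - u i l)|
            ≤ (A.1.card : ℝ) * ε := by
          have h4 : ∑ l ∈ A.1, |(1 - L n l (u i l)) - (1 - u i l)|
              ≤ ∑ _l ∈ A.1, ε := by
            apply Finset.sum_le_sum
            intro l _
            have heq : (1 - L n l (u i l)) - (1 - u i l) = -(L n l (u i l) - u i l) := by ring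
            rw [heq, abs_neg]
            exact h1 l (u i l) ⟨(hubox i l).1, (hubox i l).2⟩
          rwa [Finset.sum_const, nsmul_eq_mul] at h4
        calc |(∏ l ∈ A.1, (1 - L n l (u i l))) - ∏ l ∈ A.1, (1 - u i l)|
            ≤ (A.1.card : ℝ) * ε := le_trans hstep hsum
          _ ≤ d * ε := mul_le_mul_of_nonneg_right hcard hε.le
      have hsumbd : |(n:ℝ)⁻¹ * ∑ t ∈ Finset.range n, ∑ j ∈ A.1,
            (∏ l ∈ A.1.erase j, (1 - L n l (u t l)))
              * (if L n j (u i j) ≤ L n j (u t j) then (1:ℝ) else 0)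
          - ∑ j ∈ A.1, k A j (u i j)| ≤ d * (5*ε + d*ε + ε) := by
        rw [Finset.sum_comm, Finset.mul_sum, ← Finset.sum_sub_distrib]
        refine le_trans (Finset.abs_sum_le_sum_abs _ _) ?_
        have h5 : ∑ j ∈ A.1, |(n:ℝ)⁻¹ * ∑ t ∈ Finset.range n,
              (∏ l ∈ A.1.erase j, (1 - L n l (u t l)))
                * (if L n j (u i j) ≤ L n j (u t j) then (1:ℝ) else 0)
            - k A j (u i j)|
            ≤ ∑ _j ∈ A.1, (5*ε + d*ε + ε) := Finset.sum_le_sum hperj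
        rw [Finset.sum_const, nsmul_eq_mul] at h5
        refine le_trans h5 ?_
        apply mul_le_mul_of_nonneg_right hcard
        have h6 : (0:ℝ) ≤ d*ε := by positivity
        linarith [hε.le]
      have hsub4 : ∀ a b c e : ℝ, |(a - b) - (c - e)| ≤ |a - c| + |b - e| := by
        intro a b c e
        have h : (a-b)-(c-e) = (a-c)-(b-e) := by ring
        rw [h]
        exact abs_sub _ _
      refine le_trans (hsub4 _ _ _ _) ?_
      refine le_trans (add_le_add hprodbd hsumbd) ?_
      have hεle : ((d:ℝ)*d + 7*d) * ε ≤ δ := by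
        rw [hεdef]
        have hDpos : (0:ℝ) < (d:ℝ)*d + 7*d + 1 := by nlinarith
        calc ((d:ℝ)*d + 7*d) * (δ / ((d:ℝ)*d + 7*d + 1))
            = δ * (((d:ℝ)*d + 7*d) / ((d:ℝ)*d + 7*d + 1)) := by ring
          _ ≤ δ * 1 := by
              apply mul_le_mul_of_nonneg_left _ hδ.le
              apply div_le_one_of_le₀ (by linarith) hDpos.le
          _ = δ := mul_one δ
      have heq2 : (d:ℝ)*ε + d*(5*ε + d*ε + ε) = ((d:ℝ)*d + 7*d)*ε := by ring
      rw [heq2]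
      exact hεle
    -- convert to the sample-variance setting
    set z : ℕ → ℕ → ℝ := fun n i => f (Ihat n ω (Uhat n i ω)) with hzdef
    set yy : ℕ → ℝ := fun i => y (u i) with hyydef
    have hyyB : ∀ i, |yy i| ≤ B := fun i => hybd _ (hubox i)
    have hclose : ∀ δ : ℝ, 0 < δ → ∀ᶠ n in atTop, ∀ i < n, |z n i - yy i| ≤ δ := by
      intro δ hδ
      have hδ' : 0 < δ/(Cf + 1) := by positivity
      filter_upwards [hIclose _ hδ'] with n hn i hi
      have hzi : z n i - yy i = f (Ihat n ω (Uhat n i ω) - Iμ (u i)) := by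
        simp only [hzdef, hyydef, hydef]
        rw [map_sub]
      rw [hzi]
      have hb := hfbd (Ihat n ω (Uhat n i ω) - Iμ (u i)) (δ/(Cf+1)) hδ'.le (fun A => by
        rw [Pi.sub_apply]; exact hn i hi A)
      calc |f (Ihat n ω (Uhat n i ω) - Iμ (u i))| ≤ Cf * (δ/(Cf+1)) := hb
        _ ≤ (Cf + 1) * (δ/(Cf+1)) := by
            apply mul_le_mul_of_nonneg_right (by linarith) hδ'.le
        _ = δ := by field_simp
    have hσeq : ∀ n, σ2 n ω = (n:ℝ)⁻¹ * ∑ i ∈ Finset.range n,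
        (z n i - (n:ℝ)⁻¹ * ∑ t ∈ Finset.range n, z n t)^2 := by
      intro n
      rw [hσ2 n ω]
      congr 1
      apply Finset.sum_congr rfl
      intro i _
      congr 1
      rw [map_sub, _root_.map_smul, map_sum]
      simp only [smul_eq_mul]
      rfl
    have hconv := aux_sample_var hyyB hclose hE3 hE4
    exact Tendsto.congr (fun n => (hσeq n).symm) hconv
  -- identify the limit with the variance
  have hmem : MemLp (fun ω => y (U 0 ω)) 2 P := by
    have hbd : ∀ᵐ ω ∂P, ‖y (U 0 ω)‖ ≤ B :=
      ae_of_all _ (fun ω => by rw [Real.norm_eq_abs]; exact hybd _ (fun l => hF01 l (X 0 ω l)))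
    exact (memLp_top_of_bound (hymeas.comp (hUmeas 0)).aestronglyMeasurable B hbd).mono_exponent le_top
  have h2 : my2 = ∫ ω, (y (U 0 ω))^2 ∂P := by
    rw [hmy2def, hμmap]
    exact integral_map (hUmeas 0).aemeasurable ((hycont.pow 2).measurable).aestronglyMeasurable
  have h3 : my = ∫ ω, y (U 0 ω) ∂P := by
    rw [hmydef, hμmap]
    exact integral_map (hUmeas 0).aemeasurable hymeas.aestronglyMeasurable
  have hVareq : variance (fun ω => f (Iμ (fun j => F j (X 0 ω j)))) P = my2 - my^2 := by
    have hyeq : (fun ω => f (Iμ (fun j => F j (X 0 ω j)))) = fun ω => y (U 0 ω) := rfl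
    rw [hyeq, variance_eq_sub hmem, h2, h3]
    have hpw : (fun ω => y (U 0 ω))^2 = fun ω => (y (U 0 ω))^2 := by
      funext ω; simp
    rw [hpw]
  -- measurability of the estimator
  have hUhatmeas : ∀ (n i : ℕ) (j : Fin d), Measurable (fun ω => Uhat n i ω j) := by
    intro n i j
    have heq : (fun ω => Uhat n i ω j) = fun ω => (n:ℝ)⁻¹ * ∑ t ∈ Finset.range n,
        (if X t ω j ≤ X i ω j then (1:ℝ) else 0) := funext (fun ω => hUhat n i ω j)
    rw [heq]
    exact measurable_const.mul (Finset.measurable_sum _ (fun t _ =>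
      Measurable.ite (measurableSet_le (hVmeas t j) (hVmeas i j))
        measurable_const measurable_const))
  have hIhatmeas : ∀ (n i : ℕ) (A : {A : Finset (Fin d) // A.Nonempty}),
      Measurable (fun ω => Ihat n ω (Uhat n i ω) A) := by
    intro n i A
    have heq : (fun ω => Ihat n ω (Uhat n i ω) A) = fun ω =>
        (∏ l ∈ A.1, (1 - Uhat n i ω l))
          - (n:ℝ)⁻¹ * ∑ t ∈ Finset.range n, ∑ j ∈ A.1,
              (∏ l ∈ A.1.erase j, (1 - Uhat n t ω l))
                * (if Uhat n i ω j ≤ Uhat n t ω j then (1:ℝ) else 0) :=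
      funext (fun ω => hIhat n ω _ A)
    rw [heq]
    apply Measurable.sub
    · exact Finset.measurable_prod _ (fun l _ => measurable_const.sub (hUhatmeas n i l))
    · apply Measurable.const_mul
      apply Finset.measurable_sum
      intro t _
      apply Finset.measurable_sum
      intro j _
      exact (Finset.measurable_prod _ (fun l _ => measurable_const.sub (hUhatmeas n t l))).mul
        (Measurable.ite (measurableSet_le (hUhatmeas n i j) (hUhatmeas n t j))
          measurable_const measurable_const)
  have hσmeas : ∀ n, Measurable (σ2 n) := by
    intro n
    have heq : σ2 n = fun ω => (n:ℝ)⁻¹ * ∑ i ∈ Finset.range n,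
        (f (Ihat n ω (Uhat n i ω) - (n:ℝ)⁻¹ • ∑ t ∈ Finset.range n, Ihat n ω (Uhat n t ω)))^2 :=
      funext (hσ2 n)
    rw [heq]
    apply Measurable.const_mul
    apply Finset.measurable_sum
    intro i _
    apply Measurable.pow_const
    have hveq : Measurable (fun ω => Ihat n ω (Uhat n i ω)
        - (n:ℝ)⁻¹ • ∑ t ∈ Finset.range n, Ihat n ω (Uhat n t ω)) := by
      apply Measurable.sub
      · exact measurable_pi_lambda _ (fun A => hIhatmeas n i A)
      · apply measurable_pi_lambda
        intro A
        have heq2 : (fun ω => ((n:ℝ)⁻¹ • ∑ t ∈ Finset.range n, Ihat n ω (Uhat n t ω)) A)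
            = fun ω => (n:ℝ)⁻¹ * ∑ t ∈ Finset.range n, Ihat n ω (Uhat n t ω) A := by
          funext ω; simp [Finset.sum_apply]
        rw [heq2]
        exact measurable_const.mul (Finset.measurable_sum _ (fun t _ => hIhatmeas n t A))
    exact hfcont.measurable.comp hveq
  -- conclude via convergence in measure
  have hTIM : TendstoInMeasure P (fun n => σ2 n) atTop (fun _ => my2 - my^2) :=
    tendstoInMeasure_of_tendsto_ae (fun n => (hσmeas n).aestronglyMeasurable) hae
  intro ε hε
  have h := tendstoInMeasure_iff_dist.1 hTIM ε hε
  rw [hVareq]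
  refine tendsto_of_tendsto_of_tendsto_of_le_of_le tendsto_const_nhds h
    (fun n => zero_le) (fun n => measure_mono ?_)
  intro ωx hωx
  simp only [Set.mem_setOf_eq, Real.dist_eq] at *
  exact le_of_lt hωx
end
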